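/- arXiv:2110.01782 — 4 statements merged into one kernel-verified Lean document; each statement's English description precedes it below -/
import Mathlib

section
/- For n ≥ 5, the normal closure in B'_n of the element (σ_2σ_1^{-1})^2 is all of B'_n. Equivalently, any quotient of B'_n in which (σ_2σ_1^{-1})^2 becomes trivial is the trivial group. -/
/-- Relators of the Artin presentation of the braid group on `n` strands.
Generator `i : Fin (n-1)` corresponds to the Artin generator `σ_{i+1}`. -/
def braidRels (n : ℕ) : Set (FreeGroup (Fin (n - 1))) :=
  {r | (∃ i j : Fin (n - 1), (i : ℕ) + 1 = (j : ℕ) ∧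
          r = .of i * .of j * .of i * (.of j * .of i * .of j)⁻¹) ∨
       (∃ i j : Fin (n - 1), (i : ℕ) + 2 ≤ (j : ℕ) ∧
          r = .of i * .of j * (.of j * .of i)⁻¹)}

/-- The braid group on `n` strands. -/
def BraidGroup (n : ℕ) : Type := PresentedGroup (braidRels n)

instance (n : ℕ) : Group (BraidGroup n) := by unfold BraidGroup; infer_instance

/-- `sig n i` is the Artin generator `σ_i` (1-based: `1 ≤ i ≤ n-1`), and `1` otherwise. -/
def sig (n : ℕ) (i : ℕ) : BraidGroup n :=
  if h : 1 ≤ i ∧ i ≤ n - 1 then PresentedGroup.of ⟨i - 1, by omega⟩ else 1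

/-- The exponent sum homomorphism `B_n → ℤ`, sending each Artin generator to `1`. -/
def expSum (n : ℕ) : BraidGroup n →* Multiplicative ℤ :=
  PresentedGroup.toGroup (f := fun _ : Fin (n - 1) => Multiplicative.ofAdd (1 : ℤ))
    (by
      rintro r (⟨i, j, -, rfl⟩ | ⟨i, j, -, rfl⟩) <;>
        simp only [map_mul, map_inv, FreeGroup.lift_apply_of] <;> group)

/-- The Birman–Ko–Lee generator `ρ_{ij}`:
the half twist `(σ_{j-1} ⋯ σ_{i+1}) σ_i (σ_{j-1} ⋯ σ_{i+1})⁻¹`. -/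
def rho (n i j : ℕ) : BraidGroup n :=
  (((List.range' (i + 1) (j - 1 - i)).reverse.map (sig n)).prod) * sig n i *
    (((List.range' (i + 1) (j - 1 - i)).reverse.map (sig n)).prod)⁻¹

/-- The normal closure of `x` in the subgroup `H`. -/
def nclIn {G : Type*} [Group G] (H : Subgroup G) (x : G) : Subgroup G :=
  Subgroup.closure {y | ∃ g ∈ H, y = g * x * g⁻¹}

open scoped commutatorElement

private lemma braid_rel_one {n : ℕ} {r : FreeGroup (Fin (n-1))} (h : r ∈ braidRels n) :
    (PresentedGroup.mk (braidRels n) r : BraidGroup n) = 1 :=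
  (QuotientGroup.eq_one_iff _).mpr (Subgroup.subset_normalClosure h)

private lemma sig_eq (n i : ℕ) (h1 : 1 ≤ i) (h2 : i ≤ n - 1) :
    sig n i = PresentedGroup.of (⟨i - 1, by omega⟩ : Fin (n-1)) := by
  unfold sig
  exact dif_pos ⟨h1, h2⟩

private lemma sig_braid (n i : ℕ) (h1 : 1 ≤ i) (h2 : i + 1 ≤ n - 1) :
    sig n i * sig n (i+1) * sig n i = sig n (i+1) * sig n i * sig n (i+1) := by
  rw [sig_eq n i h1 (by omega), sig_eq n (i+1) (by omega) h2]
  set x : Fin (n-1) := ⟨i - 1, by omega⟩ with hx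
  set y : Fin (n-1) := ⟨i + 1 - 1, by omega⟩ with hy
  have hr : FreeGroup.of x * .of y * .of x * (.of y * .of x * .of y)⁻¹ ∈ braidRels n :=
    Or.inl ⟨x, y, by simp [hx, hy]; omega, rfl⟩
  have h1 := braid_rel_one hr
  rw [map_mul, map_mul, map_inv, map_mul, map_mul] at h1
  exact mul_inv_eq_one.mp h1

private lemma sig_comm (n i j : ℕ) (h1 : 1 ≤ i) (h2 : i + 2 ≤ j) (h3 : j ≤ n - 1) :
    sig n i * sig n j = sig n j * sig n i := by
  rw [sig_eq n i h1 (by omega), sig_eq n j (by omega) h3]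
  set x : Fin (n-1) := ⟨i - 1, by omega⟩ with hx
  set y : Fin (n-1) := ⟨j - 1, by omega⟩ with hy
  have hr : FreeGroup.of x * .of y * (.of y * .of x)⁻¹ ∈ braidRels n :=
    Or.inr ⟨x, y, by simp [hx, hy]; omega, rfl⟩
  have h1 := braid_rel_one hr
  rw [map_mul, map_inv, map_mul] at h1
  exact mul_inv_eq_one.mp h1
private lemma sig_conj_one (n : ℕ) : ∀ i : ℕ, 1 ≤ i → i ≤ n - 1 →
    ∃ w : BraidGroup n, sig n i = w * sig n 1 * w⁻¹ := by
  intro i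
  induction i with
  | zero => omega
  | succ k ih =>
    intro h1 h2
    rcases Nat.lt_or_ge 1 (k+1) with h | h
    · have hk1 : 1 ≤ k := by omega
      obtain ⟨w, hw⟩ := ih hk1 (by omega)
      have hb := sig_braid n k hk1 h2
      refine ⟨sig n k * sig n (k+1) * w, ?_⟩
      have key : sig n (k+1)
          = (sig n k * sig n (k+1)) * sig n k * (sig n k * sig n (k+1))⁻¹ := by
        calc sig n (k+1)
            = (sig n k * sig n (k+1) * sig n k) * ((sig n (k+1))⁻¹ * (sig n k)⁻¹) := by
              rw [hb]; group
          _ = (sig n k * sig n (k+1)) * sig n k * (sig n k * sig n (k+1))⁻¹ := by group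
      calc sig n (k+1)
          = (sig n k * sig n (k+1)) * sig n k * (sig n k * sig n (k+1))⁻¹ := key
        _ = (sig n k * sig n (k+1)) * (w * sig n 1 * w⁻¹) * (sig n k * sig n (k+1))⁻¹ := by
            rw [← hw]
        _ = (sig n k * sig n (k+1) * w) * sig n 1 * (sig n k * sig n (k+1) * w)⁻¹ := by group
    · have : k + 1 = 1 := by omega
      rw [this]
      exact ⟨1, by group⟩

private lemma sig_diff_mem (n : ℕ) (i j : ℕ) (hi1 : 1 ≤ i) (hi2 : i ≤ n - 1)
    (hj1 : 1 ≤ j) (hj2 : j ≤ n - 1) :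
    sig n i * (sig n j)⁻¹ ∈ commutator (BraidGroup n) := by
  obtain ⟨w, hw⟩ := sig_conj_one n i hi1 hi2
  obtain ⟨v, hv⟩ := sig_conj_one n j hj1 hj2
  have key : sig n i * (sig n j)⁻¹ = ⁅w, sig n 1⁆ * ⁅sig n 1, v⁆ := by
    rw [hw, hv, commutatorElement_def, commutatorElement_def]; group
  rw [key]
  exact mul_mem
    (Subgroup.commutator_mem_commutator (Subgroup.mem_top _) (Subgroup.mem_top _))
    (Subgroup.commutator_mem_commutator (Subgroup.mem_top _) (Subgroup.mem_top _))

private lemma sig_inv_diff_mem (n : ℕ) (i j : ℕ) (hi1 : 1 ≤ i) (hi2 : i ≤ n - 1)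
    (hj1 : 1 ≤ j) (hj2 : j ≤ n - 1) :
    (sig n i)⁻¹ * sig n j ∈ commutator (BraidGroup n) := by
  have h := sig_diff_mem n j i hj1 hj2 hi1 hi2
  have key : (sig n i)⁻¹ * sig n j
      = (sig n i)⁻¹ * (sig n j * (sig n i)⁻¹) * ((sig n i)⁻¹)⁻¹ := by group
  rw [key]
  exact Subgroup.Normal.conj_mem inferInstance _ h _
private lemma u_mem (n : ℕ) (hn : 5 ≤ n) :
    sig n 2 * (sig n 1)⁻¹ ∈ commutator (BraidGroup n) :=
  sig_diff_mem n 2 1 (by omega) (by omega) (by omega) (by omega)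

private lemma u2_mem (n : ℕ) (hn : 5 ≤ n) :
    (sig n 2 * (sig n 1)⁻¹) ^ 2 ∈ commutator (BraidGroup n) :=
  pow_mem (u_mem n hn) 2

private lemma sig4_comm_u2 (n : ℕ) (hn : 5 ≤ n) :
    Commute (sig n 4) ((sig n 2 * (sig n 1)⁻¹) ^ 2) := by
  have h24 : Commute (sig n 4) (sig n 2) :=
    (sig_comm n 2 4 (by omega) (by omega) (by omega)).symm
  have h14 : Commute (sig n 4) (sig n 1) :=
    (sig_comm n 1 4 (by omega) (by omega) (by omega)).symm
  exact (h24.mul_right h14.inv_right).pow_right 2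
set_option maxHeartbeats 2000000 in
private theorem braid_collapse {G : Type*} [Group G] {a b c d : G}
    (B1 : b * a * b = a * b * a) (B2 : c * b * c = b * c * b)
    (B3 : d * c * d = c * d * c) (C1 : c * a = a * c)
    (C2 : d * a = a * d) (C3 : d * b = b * d)
    (E1 : a * b⁻¹ * a * b⁻¹ = 1) : b = a := by
  have h15 : a * c * a⁻¹ = c := by
    calc a * c * a⁻¹
      _ = (a * c) * a⁻¹ := by group
      _ = (c * a) * a⁻¹ := congrArg (fun z => z * a⁻¹) C1.symm
      _ = c := by group
  have h16 : a * d * a⁻¹ = d := by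
    calc a * d * a⁻¹
      _ = (a * d) * a⁻¹ := by group
      _ = (d * a) * a⁻¹ := congrArg (fun z => z * a⁻¹) C2.symm
      _ = d := by group
  have h18 : c⁻¹ * a * c = a := by
    calc c⁻¹ * a * c
      _ = c⁻¹ * (a * c) := by group
      _ = c⁻¹ * (c * a) := congrArg (fun z => c⁻¹ * z) C1.symm
      _ = a := by group
  have h21 : a * b * a * b⁻¹ = b * a := by
    calc a * b * a * b⁻¹
      _ = (a * b * a) * b⁻¹ := by group
      _ = (b * a * b) * b⁻¹ := congrArg (fun z => z * b⁻¹) B1.symm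
      _ = b * a := by group
  have h22 : b⁻¹ * a * b * a = a * b := by
    calc b⁻¹ * a * b * a
      _ = b⁻¹ * (a * b * a) := by group
      _ = b⁻¹ * (b * a * b) := congrArg (fun z => b⁻¹ * z) B1.symm
      _ = a * b := by group
  have h23 : b * c * b * c⁻¹ = c * b := by
    calc b * c * b * c⁻¹
      _ = (b * c * b) * c⁻¹ := by group
      _ = (c * b * c) * c⁻¹ := congrArg (fun z => z * c⁻¹) B2.symm
      _ = c * b := by group
  have h24 : c⁻¹ * b * c * b = b * c := by
    calc c⁻¹ * b * c * b
      _ = c⁻¹ * (b * c * b) := by group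
      _ = c⁻¹ * (c * b * c) := congrArg (fun z => c⁻¹ * z) B2.symm
      _ = b * c := by group
  have h25 : c * d * c * d⁻¹ = d * c := by
    calc c * d * c * d⁻¹
      _ = (c * d * c) * d⁻¹ := by group
      _ = (d * c * d) * d⁻¹ := congrArg (fun z => z * d⁻¹) B3.symm
      _ = d * c := by group
  have h27 : c * b * a * c = b * c * b * a := by
    calc c * b * a * c
      _ = c * b * (a * c) := by group
      _ = c * b * (c * a) := congrArg (fun z => c * b * z) C1.symm
      _ = (c * b * c) * a := by group
      _ = (b * c * b) * a := congrArg (fun z => z * a) B2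
      _ = b * c * b * a := by group
  have h29 : a⁻¹ * c = c * a⁻¹ := by
    calc a⁻¹ * c
      _ = a⁻¹ * (c) := by group
      _ = a⁻¹ * (a * c * a⁻¹) := congrArg (fun z => a⁻¹ * z) h15.symm
      _ = c * a⁻¹ := by group
  have h30 : c * a⁻¹ * c⁻¹ = a⁻¹ := by
    calc c * a⁻¹ * c⁻¹
      _ = (c * a⁻¹) * c⁻¹ := by group
      _ = (a⁻¹ * c) * c⁻¹ := congrArg (fun z => z * c⁻¹) h29.symm
      _ = a⁻¹ := by group
  have h33 : a⁻¹ * d = d * a⁻¹ := by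
    calc a⁻¹ * d
      _ = a⁻¹ * (d) := by group
      _ = a⁻¹ * (a * d * a⁻¹) := congrArg (fun z => a⁻¹ * z) h16.symm
      _ = d * a⁻¹ := by group
  have h35 : a⁻¹ * b * d = d * a⁻¹ * b := by
    calc a⁻¹ * b * d
      _ = a⁻¹ * (b * d) := by group
      _ = a⁻¹ * (d * b) := congrArg (fun z => a⁻¹ * z) C3.symm
      _ = (a⁻¹ * d) * b := by group
      _ = (d * a⁻¹) * b := congrArg (fun z => z * b) h33
      _ = d * a⁻¹ * b := by group
  have h42 : c⁻¹ * a = a * c⁻¹ := by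
    calc c⁻¹ * a
      _ = (c⁻¹ * a * c) * c⁻¹ := by group
      _ = (a) * c⁻¹ := congrArg (fun z => z * c⁻¹) h18
      _ = a * c⁻¹ := by group
  have h70 : b⁻¹ * a * b⁻¹ = a⁻¹ := by
    calc b⁻¹ * a * b⁻¹
      _ = a⁻¹ * (a * b⁻¹ * a * b⁻¹) := by group
      _ = a⁻¹ * (1) := congrArg (fun z => a⁻¹ * z) E1
      _ = a⁻¹ := by group
  have h71 : b * a⁻¹ = a * b⁻¹ := by
    calc b * a⁻¹
      _ = b * (a⁻¹) := by group
      _ = b * (b⁻¹ * a * b⁻¹) := congrArg (fun z => b * z) h70.symm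
      _ = a * b⁻¹ := by group
  have h74 : b * c * a⁻¹ = a * b⁻¹ * c := by
    calc b * c * a⁻¹
      _ = b * (c * a⁻¹) := by group
      _ = b * (a⁻¹ * c) := congrArg (fun z => b * z) h29.symm
      _ = (b * a⁻¹) * c := by group
      _ = (a * b⁻¹) * c := congrArg (fun z => z * c) h71
      _ = a * b⁻¹ * c := by group
  have h75 : b⁻¹ * a = a⁻¹ * b := by
    calc b⁻¹ * a
      _ = (b⁻¹ * a * b⁻¹) * b := by group
      _ = (a⁻¹) * b := congrArg (fun z => z * b) h70
      _ = a⁻¹ * b := by group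
  have h79 : b * a * c * b⁻¹ = a * c * b⁻¹ * c := by
    calc b * a * c * b⁻¹
      _ = b * (a * c) * b⁻¹ := by group
      _ = b * (c * a) * b⁻¹ := congrArg (fun z => b * z * b⁻¹) C1.symm
      _ = b * c * (a * b⁻¹) := by group
      _ = b * c * (b * a⁻¹) := congrArg (fun z => b * c * z) h71.symm
      _ = (b * c * b) * a⁻¹ := by group
      _ = (c * b * c) * a⁻¹ := congrArg (fun z => z * a⁻¹) B2.symm
      _ = c * (b * c * a⁻¹) := by group
      _ = c * (a * b⁻¹ * c) := congrArg (fun z => c * z) h74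
      _ = (c * a) * b⁻¹ * c := by group
      _ = (a * c) * b⁻¹ * c := congrArg (fun z => z * b⁻¹ * c) C1
      _ = a * c * b⁻¹ * c := by group
  have h87 : a⁻¹ * b * a = b * a * b⁻¹ := by
    calc a⁻¹ * b * a
      _ = a⁻¹ * (b * a) := by group
      _ = a⁻¹ * (a * b * a * b⁻¹) := congrArg (fun z => a⁻¹ * z) h21.symm
      _ = b * a * b⁻¹ := by group
  have h99 : b * a * a = a * b * b := by
    calc b * a * a
      _ = a⁻¹ * (a * b * a) * a := by group
      _ = a⁻¹ * (b * a * b) * a := congrArg (fun z => a⁻¹ * z * a) B1.symm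
      _ = (a⁻¹ * b) * a * b * a := by group
      _ = (b⁻¹ * a) * a * b * a := congrArg (fun z => z * a * b * a) h75.symm
      _ = b⁻¹ * a * (a * b * a) := by group
      _ = b⁻¹ * a * (b * a * b) := congrArg (fun z => b⁻¹ * a * z) B1.symm
      _ = (b⁻¹ * a * b * a) * b := by group
      _ = (a * b) * b := congrArg (fun z => z * b) h22
      _ = a * b * b := by group
  have h100 : b⁻¹ * c * b = c * b * c⁻¹ := by
    calc b⁻¹ * c * b
      _ = b⁻¹ * (c * b) := by group
      _ = b⁻¹ * (b * c * b * c⁻¹) := congrArg (fun z => b⁻¹ * z) h23.symm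
      _ = c * b * c⁻¹ := by group
  have h106 : c⁻¹ * b * c = b * c * b⁻¹ := by
    calc c⁻¹ * b * c
      _ = (c⁻¹ * b * c * b) * b⁻¹ := by group
      _ = (b * c) * b⁻¹ := congrArg (fun z => z * b⁻¹) h24
      _ = b * c * b⁻¹ := by group
  have h107 : b * c * b⁻¹ * c⁻¹ = c⁻¹ * b := by
    calc b * c * b⁻¹ * c⁻¹
      _ = (b * c * b⁻¹) * c⁻¹ := by group
      _ = (c⁻¹ * b * c) * c⁻¹ := congrArg (fun z => z * c⁻¹) h106.symm
      _ = c⁻¹ * b := by group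
  have h108 : c⁻¹ * b * a * c = a * c * b * c⁻¹ := by
    calc c⁻¹ * b * a * c
      _ = c⁻¹ * b * (a * c) := by group
      _ = c⁻¹ * b * (c * a) := congrArg (fun z => c⁻¹ * b * z) C1.symm
      _ = (c⁻¹ * b * c) * a := by group
      _ = (b * c * b⁻¹) * a := congrArg (fun z => z * a) h106
      _ = b * c * (b⁻¹ * a) := by group
      _ = b * c * (a⁻¹ * b) := congrArg (fun z => b * c * z) h75
      _ = (b * c * a⁻¹) * b := by group
      _ = (a * b⁻¹ * c) * b := congrArg (fun z => z * b) h74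
      _ = a * (b⁻¹ * c * b) := by group
      _ = a * (c * b * c⁻¹) := congrArg (fun z => a * z) h100
      _ = a * c * b * c⁻¹ := by group
  have h111 : c⁻¹ * d * c = d * c * d⁻¹ := by
    calc c⁻¹ * d * c
      _ = c⁻¹ * (d * c) := by group
      _ = c⁻¹ * (c * d * c * d⁻¹) := congrArg (fun z => c⁻¹ * z) h25.symm
      _ = d * c * d⁻¹ := by group
  have h159 : b * c * b * a * b⁻¹ = a * c * c * b⁻¹ * c := by
    calc b * c * b * a * b⁻¹
      _ = (b * c * b * a) * b⁻¹ := by group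
      _ = (c * b * a * c) * b⁻¹ := congrArg (fun z => z * b⁻¹) h27.symm
      _ = c * (b * a * c * b⁻¹) := by group
      _ = c * (a * c * b⁻¹ * c) := congrArg (fun z => c * z) h79
      _ = (c * a) * c * b⁻¹ * c := by group
      _ = (a * c) * c * b⁻¹ * c := congrArg (fun z => z * c * b⁻¹ * c) C1
      _ = a * c * c * b⁻¹ * c := by group
  have h169 : a * c * c * b⁻¹ * c = a * c * b * a * c⁻¹ := by
    calc a * c * c * b⁻¹ * c
      _ = (a * c * c * b⁻¹ * c) := by group
      _ = (b * c * b * a * b⁻¹) := h159.symm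
      _ = b * c * (b * a * b⁻¹) := by group
      _ = b * c * (a⁻¹ * b * a) := congrArg (fun z => b * c * z) h87.symm
      _ = (b * c * a⁻¹) * b * a := by group
      _ = (a * b⁻¹ * c) * b * a := congrArg (fun z => z * b * a) h74
      _ = a * (b⁻¹ * c * b) * a := by group
      _ = a * (c * b * c⁻¹) * a := congrArg (fun z => a * z * a) h100
      _ = a * c * b * (c⁻¹ * a) := by group
      _ = a * c * b * (a * c⁻¹) := congrArg (fun z => a * c * b * z) h42
      _ = a * c * b * a * c⁻¹ := by group
  have h217 : a * c⁻¹ * b * b * c = a * c * b * a * c⁻¹ := by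
    calc a * c⁻¹ * b * b * c
      _ = (a * c⁻¹) * b * b * c := by group
      _ = (c⁻¹ * a) * b * b * c := congrArg (fun z => z * b * b * c) h42.symm
      _ = c⁻¹ * (a * b * b) * c := by group
      _ = c⁻¹ * (b * a * a) * c := congrArg (fun z => c⁻¹ * z * c) h99.symm
      _ = c⁻¹ * b * a * (a * c) := by group
      _ = c⁻¹ * b * a * (c * a) := congrArg (fun z => c⁻¹ * b * a * z) C1.symm
      _ = (c⁻¹ * b * a * c) * a := by group
      _ = (a * c * b * c⁻¹) * a := congrArg (fun z => z * a) h108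
      _ = a * c * b * (c⁻¹ * a) := by group
      _ = a * c * b * (a * c⁻¹) := congrArg (fun z => a * c * b * z) h42
      _ = a * c * b * a * c⁻¹ := by group
  have h341 : c * b⁻¹ * c * c = a * b * c * b⁻¹ := by
    calc c * b⁻¹ * c * c
      _ = a⁻¹ * (a * c * b⁻¹ * c) * c := by group
      _ = a⁻¹ * (b * a * c * b⁻¹) * c := congrArg (fun z => a⁻¹ * z * c) h79.symm
      _ = (a⁻¹ * b) * a * c * b⁻¹ * c := by group
      _ = (b⁻¹ * a) * a * c * b⁻¹ * c := congrArg (fun z => z * a * c * b⁻¹ * c) h75.symm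
      _ = b⁻¹ * a * (a * c * b⁻¹ * c) := by group
      _ = b⁻¹ * a * (b * a * c * b⁻¹) := congrArg (fun z => b⁻¹ * a * z) h79.symm
      _ = (b⁻¹ * a * b * a) * c * b⁻¹ := by group
      _ = (a * b) * c * b⁻¹ := congrArg (fun z => z * c * b⁻¹) h22
      _ = a * b * c * b⁻¹ := by group
  have h342 : c * b⁻¹ * c = a * c⁻¹ * b := by
    calc c * b⁻¹ * c
      _ = (c * b⁻¹ * c * c) * c⁻¹ := by group
      _ = (a * b * c * b⁻¹) * c⁻¹ := congrArg (fun z => z * c⁻¹) h341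
      _ = a * (b * c * b⁻¹ * c⁻¹) := by group
      _ = a * (c⁻¹ * b) := congrArg (fun z => a * z) h107
      _ = a * c⁻¹ * b := by group
  have h344 : a * c⁻¹ * c⁻¹ * b = b⁻¹ * c := by
    calc a * c⁻¹ * c⁻¹ * b
      _ = (a * c⁻¹) * c⁻¹ * b := by group
      _ = (c⁻¹ * a) * c⁻¹ * b := congrArg (fun z => z * c⁻¹ * b) h42.symm
      _ = c⁻¹ * (a * c⁻¹ * b) := by group
      _ = c⁻¹ * (c * b⁻¹ * c) := congrArg (fun z => c⁻¹ * z) h342.symm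
      _ = b⁻¹ * c := by group
  have h350 : a * c * b * a * c⁻¹ = c * c * b := by
    calc a * c * b * a * c⁻¹
      _ = (a * c * b * a * c⁻¹) := by group
      _ = (a * c⁻¹ * b * b * c) := h217.symm
      _ = (a * c⁻¹ * b) * b * c := by group
      _ = (c * b⁻¹ * c) * b * c := congrArg (fun z => z * b * c) h342.symm
      _ = c * b⁻¹ * (c * b * c) := by group
      _ = c * b⁻¹ * (b * c * b) := congrArg (fun z => c * b⁻¹ * z) B2
      _ = c * c * b := by group
  have h355 : c * c * b = a * a * b := by
    calc c * c * b
      _ = (c * c * b) := by group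
      _ = (a * c * b * a * c⁻¹) := h350.symm
      _ = (a * c * b * a * c⁻¹) := by group
      _ = (a * c * c * b⁻¹ * c) := h169.symm
      _ = a * c * (c * b⁻¹ * c) := by group
      _ = a * c * (a * c⁻¹ * b) := congrArg (fun z => a * c * z) h342
      _ = a * (c * a) * c⁻¹ * b := by group
      _ = a * (a * c) * c⁻¹ * b := congrArg (fun z => a * z * c⁻¹ * b) C1
      _ = a * a * b := by group
  have h356 : c * c = a * a := by
    calc c * c
      _ = (c * c * b) * b⁻¹ := by group
      _ = (a * a * b) * b⁻¹ := congrArg (fun z => z * b⁻¹) h355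
      _ = a * a := by group
  have h361 : c * a⁻¹ = a * c⁻¹ := by
    calc c * a⁻¹
      _ = c * (a⁻¹) := by group
      _ = c * (c * a⁻¹ * c⁻¹) := congrArg (fun z => c * z) h30.symm
      _ = (c * c) * a⁻¹ * c⁻¹ := by group
      _ = (a * a) * a⁻¹ * c⁻¹ := congrArg (fun z => z * a⁻¹ * c⁻¹) h356
      _ = a * c⁻¹ := by group
  have h362 : a * c⁻¹ * c⁻¹ = a⁻¹ := by
    calc a * c⁻¹ * c⁻¹
      _ = (a * c⁻¹) * c⁻¹ := by group
      _ = (c⁻¹ * a) * c⁻¹ := congrArg (fun z => z * c⁻¹) h42.symm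
      _ = c⁻¹ * (a * c⁻¹) := by group
      _ = c⁻¹ * (c * a⁻¹) := congrArg (fun z => c⁻¹ * z) h361.symm
      _ = a⁻¹ := by group
  have h387 : b⁻¹ * c = a⁻¹ * b := by
    calc b⁻¹ * c
      _ = (b⁻¹ * c) := by group
      _ = (a * c⁻¹ * c⁻¹ * b) := h344.symm
      _ = (a * c⁻¹ * c⁻¹) * b := by group
      _ = (a⁻¹) * b := congrArg (fun z => z * b) h362
      _ = a⁻¹ * b := by group
  have h388 : c = a := by
    calc c
      _ = b * (b⁻¹ * c) := by group
      _ = b * (a⁻¹ * b) := congrArg (fun z => b * z) h387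
      _ = (b * a⁻¹) * b := by group
      _ = (a * b⁻¹) * b := congrArg (fun z => z * b) h71
      _ = a := by group
  have h389 : a * c⁻¹ = 1 := by
    calc a * c⁻¹
      _ = (a) * c⁻¹ := by group
      _ = (c) * c⁻¹ := congrArg (fun z => z * c⁻¹) h388.symm
      _ = 1 := by group
  have h395 : d = a := by
    calc d
      _ = (1) * d := by group
      _ = (a * c⁻¹) * d := congrArg (fun z => z * d) h389.symm
      _ = (a * c⁻¹) * d := by group
      _ = (c⁻¹ * a) * d := congrArg (fun z => z * d) h42.symm
      _ = c⁻¹ * (a * d) := by group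
      _ = c⁻¹ * (d * a) := congrArg (fun z => c⁻¹ * z) C2.symm
      _ = c⁻¹ * d * (a) := by group
      _ = c⁻¹ * d * (c) := congrArg (fun z => c⁻¹ * d * z) h388.symm
      _ = (c⁻¹ * d * c) := by group
      _ = (d * c * d⁻¹) := h111
      _ = d * (c) * d⁻¹ := by group
      _ = d * (a) * d⁻¹ := congrArg (fun z => d * z * d⁻¹) h388
      _ = (d * a) * d⁻¹ := by group
      _ = (a * d) * d⁻¹ := congrArg (fun z => z * d⁻¹) C2
      _ = a := by group
  have h397 : b * a = a * b := by
    calc b * a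
      _ = b * (a) := by group
      _ = b * (d) := congrArg (fun z => b * z) h395.symm
      _ = (b * d) := by group
      _ = (d * b) := C3.symm
      _ = (d) * b := by group
      _ = (a) * b := congrArg (fun z => z * b) h395
      _ = a * b := by group
  have h401 : b = a := by
    calc b
      _ = (a) * a⁻¹ * b := by group
      _ = (d) * a⁻¹ * b := congrArg (fun z => z * a⁻¹ * b) h395.symm
      _ = (d * a⁻¹ * b) := by group
      _ = (a⁻¹ * b * d) := h35.symm
      _ = a⁻¹ * b * (d) := by group
      _ = a⁻¹ * b * (a) := congrArg (fun z => a⁻¹ * b * z) h395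
      _ = (a⁻¹ * b * a) := by group
      _ = (b * a * b⁻¹) := h87
      _ = (b * a) * b⁻¹ := by group
      _ = (a * b) * b⁻¹ := congrArg (fun z => z * b⁻¹) h397
      _ = a := by group
  exact h401
private lemma conj_S (n : ℕ) (hn : 5 ≤ n) (i : ℕ) (hi1 : 1 ≤ i) (hi2 : i ≤ n - 1)
    {x : BraidGroup n}
    (hx : x ∈ {y | ∃ g ∈ commutator (BraidGroup n),
        y = g * (sig n 2 * (sig n 1)⁻¹) ^ 2 * g⁻¹}) :
    (sig n i * x * (sig n i)⁻¹ ∈ {y | ∃ g ∈ commutator (BraidGroup n),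
        y = g * (sig n 2 * (sig n 1)⁻¹) ^ 2 * g⁻¹}) ∧
    ((sig n i)⁻¹ * x * sig n i ∈ {y | ∃ g ∈ commutator (BraidGroup n),
        y = g * (sig n 2 * (sig n 1)⁻¹) ^ 2 * g⁻¹}) := by
  obtain ⟨g, hg, rfl⟩ := hx
  have hcomm := sig4_comm_u2 n hn
  have h4a : (1:ℕ) ≤ 4 := by omega
  have h4b : 4 ≤ n - 1 := by omega
  have hkey1 : (sig n 4)⁻¹ * (sig n 2 * (sig n 1)⁻¹) ^ 2 * sig n 4
      = (sig n 2 * (sig n 1)⁻¹) ^ 2 := by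
    rw [hcomm.inv_left.eq]; group
  have hkey2 : sig n 4 * (sig n 2 * (sig n 1)⁻¹) ^ 2 * (sig n 4)⁻¹
      = (sig n 2 * (sig n 1)⁻¹) ^ 2 := by
    rw [hcomm.eq]; group
  constructor
  · refine ⟨sig n i * g * (sig n 4)⁻¹, ?_, ?_⟩
    · have heq : sig n i * g * (sig n 4)⁻¹
          = (sig n i * g * (sig n i)⁻¹) * (sig n i * (sig n 4)⁻¹) := by group
      rw [heq]
      exact mul_mem (Subgroup.Normal.conj_mem inferInstance _ hg _)
        (sig_diff_mem n i 4 hi1 hi2 h4a h4b)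
    · have step1 : sig n i * (g * (sig n 2 * (sig n 1)⁻¹) ^ 2 * g⁻¹) * (sig n i)⁻¹
          = sig n i * g * ((sig n 4)⁻¹ * (sig n 2 * (sig n 1)⁻¹) ^ 2 * sig n 4)
            * g⁻¹ * (sig n i)⁻¹ := by
        rw [hkey1]; group
      have step2 : sig n i * g * ((sig n 4)⁻¹ * (sig n 2 * (sig n 1)⁻¹) ^ 2 * sig n 4)
            * g⁻¹ * (sig n i)⁻¹
          = (sig n i * g * (sig n 4)⁻¹) * (sig n 2 * (sig n 1)⁻¹) ^ 2
            * (sig n i * g * (sig n 4)⁻¹)⁻¹ := by group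
      rw [step1, step2]
  · refine ⟨(sig n i)⁻¹ * g * sig n 4, ?_, ?_⟩
    · have heq : (sig n i)⁻¹ * g * sig n 4
          = ((sig n i)⁻¹ * g * ((sig n i)⁻¹)⁻¹) * ((sig n i)⁻¹ * sig n 4) := by group
      rw [heq]
      exact mul_mem (Subgroup.Normal.conj_mem inferInstance _ hg _)
        (sig_inv_diff_mem n i 4 hi1 hi2 h4a h4b)
    · have step1 : (sig n i)⁻¹ * (g * (sig n 2 * (sig n 1)⁻¹) ^ 2 * g⁻¹) * sig n i
          = (sig n i)⁻¹ * g * (sig n 4 * (sig n 2 * (sig n 1)⁻¹) ^ 2 * (sig n 4)⁻¹)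
            * g⁻¹ * sig n i := by
        rw [hkey2]; group
      have step2 : (sig n i)⁻¹ * g * (sig n 4 * (sig n 2 * (sig n 1)⁻¹) ^ 2 * (sig n 4)⁻¹)
            * g⁻¹ * sig n i
          = ((sig n i)⁻¹ * g * sig n 4) * (sig n 2 * (sig n 1)⁻¹) ^ 2
            * ((sig n i)⁻¹ * g * sig n 4)⁻¹ := by group
      rw [step1, step2]

private lemma conj_mem_N (n : ℕ) (hn : 5 ≤ n) (i : ℕ) (hi1 : 1 ≤ i) (hi2 : i ≤ n - 1)
    {x : BraidGroup n}
    (hx : x ∈ Subgroup.closure {y | ∃ g ∈ commutator (BraidGroup n),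
        y = g * (sig n 2 * (sig n 1)⁻¹) ^ 2 * g⁻¹}) :
    (sig n i * x * (sig n i)⁻¹ ∈ Subgroup.closure {y | ∃ g ∈ commutator (BraidGroup n),
        y = g * (sig n 2 * (sig n 1)⁻¹) ^ 2 * g⁻¹}) ∧
    ((sig n i)⁻¹ * x * sig n i ∈ Subgroup.closure {y | ∃ g ∈ commutator (BraidGroup n),
        y = g * (sig n 2 * (sig n 1)⁻¹) ^ 2 * g⁻¹}) := by
  induction hx using Subgroup.closure_induction with
  | mem y hy =>
      exact ⟨Subgroup.subset_closure (conj_S n hn i hi1 hi2 hy).1,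
        Subgroup.subset_closure (conj_S n hn i hi1 hi2 hy).2⟩
  | one =>
      constructor
      · have h : sig n i * 1 * (sig n i)⁻¹ = 1 := by group
        rw [h]; exact one_mem _
      · have h : (sig n i)⁻¹ * 1 * sig n i = 1 := by group
        rw [h]; exact one_mem _
  | mul y z hy hz ihy ihz =>
      constructor
      · have h : sig n i * (y * z) * (sig n i)⁻¹
            = (sig n i * y * (sig n i)⁻¹) * (sig n i * z * (sig n i)⁻¹) := by group
        rw [h]; exact mul_mem ihy.1 ihz.1
      · have h : (sig n i)⁻¹ * (y * z) * sig n i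
            = ((sig n i)⁻¹ * y * sig n i) * ((sig n i)⁻¹ * z * sig n i) := by group
        rw [h]; exact mul_mem ihy.2 ihz.2
  | inv y hy ihy =>
      constructor
      · have h : sig n i * y⁻¹ * (sig n i)⁻¹ = (sig n i * y * (sig n i)⁻¹)⁻¹ := by group
        rw [h]; exact inv_mem ihy.1
      · have h : (sig n i)⁻¹ * y⁻¹ * sig n i = ((sig n i)⁻¹ * y * sig n i)⁻¹ := by group
        rw [h]; exact inv_mem ihy.2

private lemma N_normal (n : ℕ) (hn : 5 ≤ n) :
    (Subgroup.closure {y | ∃ g ∈ commutator (BraidGroup n),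
        y = g * (sig n 2 * (sig n 1)⁻¹) ^ 2 * g⁻¹}).Normal := by
  rw [← Subgroup.normalizer_eq_top_iff, eq_top_iff]
  intro g _
  have key : ∀ j : Fin (n-1), sig n (j.1 + 1) ∈
      Subgroup.normalizer (Subgroup.closure {y | ∃ g ∈ commutator (BraidGroup n),
        y = g * (sig n 2 * (sig n 1)⁻¹) ^ 2 * g⁻¹} : Set (BraidGroup n)) := by
    intro j
    have hjlt := j.isLt
    refine Subgroup.mem_normalizer_iff.mpr fun h => ⟨fun hh =>
      (conj_mem_N n hn (j.1+1) (by omega) (by omega) hh).1, fun hh => ?_⟩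
    have h2 := (conj_mem_N n hn (j.1+1) (by omega) (by omega) hh).2
    have heq : (sig n (j.1+1))⁻¹ * (sig n (j.1+1) * h * (sig n (j.1+1))⁻¹) * sig n (j.1+1)
        = h := by group
    rwa [heq] at h2
  have key2 : ∀ j : Fin (n-1), (PresentedGroup.of j : BraidGroup n) ∈
      Subgroup.normalizer (Subgroup.closure {y | ∃ g ∈ commutator (BraidGroup n),
        y = g * (sig n 2 * (sig n 1)⁻¹) ^ 2 * g⁻¹} : Set (BraidGroup n)) := by
    intro j
    have hjlt := j.isLt
    have h1 := key j
    have hsig : sig n (j.1 + 1) = (PresentedGroup.of j : BraidGroup n) := by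
      rw [sig_eq n (j.1 + 1) (by omega) (by omega)]
      exact congrArg _ (Fin.ext (by simp))
    rwa [hsig] at h1
  exact PresentedGroup.generated_by (braidRels n) _ key2 g
private lemma step_collapse {G : Type*} [Group G] {x y : G}
    (hb : x * y * x = y * x * y) (hc : x * y = y * x) : y = x := by
  have h : x * y * x = x * y * y := by
    calc x * y * x = y * x * y := hb
      _ = x * y * y := by rw [← hc]
  exact (mul_left_cancel h).symm

private lemma quot_abelian (n : ℕ) (hn : 5 ≤ n) :
    ∀ g h : BraidGroup n,
      ⁅g, h⁆ ∈ Subgroup.normalClosure {(sig n 2 * (sig n 1)⁻¹) ^ 2} := by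
  set M := Subgroup.normalClosure {(sig n 2 * (sig n 1)⁻¹) ^ 2} with hM
  set π := QuotientGroup.mk' M with hπ
  have hbr : ∀ i, 1 ≤ i → i + 1 ≤ n - 1 →
      π (sig n i) * π (sig n (i+1)) * π (sig n i)
        = π (sig n (i+1)) * π (sig n i) * π (sig n (i+1)) := by
    intro i h1 h2
    have := congrArg π (sig_braid n i h1 h2)
    simpa [map_mul] using this
  have hcm : ∀ i j, 1 ≤ i → i + 2 ≤ j → j ≤ n - 1 →
      π (sig n i) * π (sig n j) = π (sig n j) * π (sig n i) := by
    intro i j h1 h2 h3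
    have := congrArg π (sig_comm n i j h1 h2 h3)
    simpa [map_mul] using this
  have hE : π (sig n 1) * (π (sig n 2))⁻¹ * π (sig n 1) * (π (sig n 2))⁻¹ = 1 := by
    have hm : (sig n 2 * (sig n 1)⁻¹) ^ 2 ∈ M :=
      Subgroup.subset_normalClosure rfl
    have h0 : π ((sig n 2 * (sig n 1)⁻¹) ^ 2) = 1 := (QuotientGroup.eq_one_iff _).mpr hm
    rw [map_pow, map_mul, map_inv, pow_two] at h0
    calc π (sig n 1) * (π (sig n 2))⁻¹ * π (sig n 1) * (π (sig n 2))⁻¹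
        = (π (sig n 2) * (π (sig n 1))⁻¹ * (π (sig n 2) * (π (sig n 1))⁻¹))⁻¹ := by
          group
      _ = 1⁻¹ := by rw [h0]
      _ = 1 := inv_one
  have h12 : π (sig n 2) = π (sig n 1) :=
    braid_collapse ((hbr 1 (by omega) (by omega)).symm) ((hbr 2 (by omega) (by omega)).symm)
      ((hbr 3 (by omega) (by omega)).symm) ((hcm 1 3 (by omega) (by omega) (by omega)).symm)
      ((hcm 1 4 (by omega) (by omega) (by omega)).symm)
      ((hcm 2 4 (by omega) (by omega) (by omega)).symm) hE
  have hall : ∀ i, i ≤ n - 1 → 1 ≤ i → π (sig n i) = π (sig n 1) := by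
    intro i
    induction i using Nat.strong_induction_on with
    | _ i IH =>
      intro h2 h1
      match i, h1, h2 with
      | 1, _, _ => rfl
      | 2, _, _ => exact h12
      | (k+3), h1, h2 =>
        have e1 : π (sig n (k+1)) = π (sig n 1) := IH (k+1) (by omega) (by omega) (by omega)
        have e2 : π (sig n (k+2)) = π (sig n 1) := IH (k+2) (by omega) (by omega) (by omega)
        have hc : π (sig n (k+2)) * π (sig n (k+3)) = π (sig n (k+3)) * π (sig n (k+2)) := by
          rw [e2, ← e1]
          exact hcm (k+1) (k+3) (by omega) (by omega) (by omega)
        have hb := hbr (k+2) (by omega) (by omega)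
        have : π (sig n (k+3)) = π (sig n (k+2)) := step_collapse hb hc
        rw [this, e2]
  have hz : ∀ g : BraidGroup n, π g ∈ Subgroup.zpowers (π (sig n 1)) := by
    have base : ∀ j : Fin (n-1), (PresentedGroup.of j : BraidGroup n) ∈
        (Subgroup.zpowers (π (sig n 1))).comap π := by
      intro j
      have hjlt := j.isLt
      apply Subgroup.mem_comap.mpr
      have hsig : (PresentedGroup.of j : BraidGroup n) = sig n (j.1 + 1) := by
        rw [sig_eq n (j.1 + 1) (by omega) (by omega)]
        exact (congrArg _ (Fin.ext (by simp))).symm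
      have h9 := hall (j.1+1) (by omega) (by omega)
      rw [hsig]
      exact h9 ▸ Subgroup.mem_zpowers _
    intro g
    exact Subgroup.mem_comap.mp (PresentedGroup.generated_by (braidRels n) _ base g)
  intro g h
  obtain ⟨zg, hzg⟩ := Subgroup.mem_zpowers_iff.mp (hz g)
  obtain ⟨zh, hzh⟩ := Subgroup.mem_zpowers_iff.mp (hz h)
  have hcomm : Commute (π g) (π h) := by
    rw [← hzg, ← hzh]
    exact Commute.zpow_zpow (Commute.refl _) zg zh
  have h1 : π ⁅g, h⁆ = 1 := by
    rw [map_commutatorElement]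
    exact commutatorElement_eq_one_iff_commute.mpr hcomm
  have h2 : ⁅g, h⁆ ∈ π.ker := MonoidHom.mem_ker.mpr h1
  rwa [hπ, QuotientGroup.ker_mk'] at h2

/-- For n ≥ 5, the normal closure in B'_n of (σ₂σ₁⁻¹)² is all of B'_n; equivalently,
any quotient of B'_n killing (σ₂σ₁⁻¹)² is trivial. -/
theorem normalClosure_sq_eq_commutator (n : ℕ) (hn : 5 ≤ n) :
    nclIn (commutator (BraidGroup n)) ((sig n 2 * (sig n 1)⁻¹) ^ 2) =
      commutator (BraidGroup n) ∧
    ∀ {G : Type} [Group G] (q : ↥(commutator (BraidGroup n)) →* G),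
      Function.Surjective q →
      (∀ a : ↥(commutator (BraidGroup n)),
        (a : BraidGroup n) = (sig n 2 * (sig n 1)⁻¹) ^ 2 → q a = 1) →
      ∀ g : G, g = 1 := by
  have hu2 := u2_mem n hn
  have hu2N : (sig n 2 * (sig n 1)⁻¹) ^ 2 ∈ Subgroup.closure
      {y | ∃ g ∈ commutator (BraidGroup n), y = g * (sig n 2 * (sig n 1)⁻¹) ^ 2 * g⁻¹} :=
    Subgroup.subset_closure ⟨1, one_mem _, by group⟩
  have hMN : Subgroup.normalClosure {(sig n 2 * (sig n 1)⁻¹) ^ 2} ≤ Subgroup.closure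
      {y | ∃ g ∈ commutator (BraidGroup n), y = g * (sig n 2 * (sig n 1)⁻¹) ^ 2 * g⁻¹} := by
    haveI := N_normal n hn
    exact Subgroup.normalClosure_le_normal (Set.singleton_subset_iff.mpr hu2N)
  have hpart1 : nclIn (commutator (BraidGroup n)) ((sig n 2 * (sig n 1)⁻¹) ^ 2) =
      commutator (BraidGroup n) := by
    unfold nclIn
    refine le_antisymm ((Subgroup.closure_le _).mpr ?_) ?_
    · rintro y ⟨g, hg, rfl⟩
      exact mul_mem (mul_mem hg hu2) (inv_mem hg)
    · exact (Subgroup.commutator_le.mpr fun g _ h _ => hMN (quot_abelian n hn g h))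
  refine ⟨hpart1, ?_⟩
  intro G _ q hsurj hkill g
  have hx1 : ∀ x : ↥(commutator (BraidGroup n)), q x = 1 := by
    have hclos : Subgroup.closure
        {y | ∃ g ∈ commutator (BraidGroup n), y = g * (sig n 2 * (sig n 1)⁻¹) ^ 2 * g⁻¹}
        = commutator (BraidGroup n) := hpart1
    have hSK : Subgroup.closure
        {y | ∃ g ∈ commutator (BraidGroup n), y = g * (sig n 2 * (sig n 1)⁻¹) ^ 2 * g⁻¹}
        ≤ Subgroup.map (commutator (BraidGroup n)).subtype q.ker := by
      refine (Subgroup.closure_le _).mpr ?_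
      rintro y ⟨g, hg, rfl⟩
      refine ⟨⟨g, hg⟩ * ⟨(sig n 2 * (sig n 1)⁻¹) ^ 2, hu2⟩ * ⟨g, hg⟩⁻¹, ?_, rfl⟩
      have hq : q (⟨g, hg⟩ * ⟨(sig n 2 * (sig n 1)⁻¹) ^ 2, hu2⟩ * ⟨g, hg⟩⁻¹) = 1 := by
        rw [map_mul, map_mul, map_inv, hkill ⟨(sig n 2 * (sig n 1)⁻¹) ^ 2, hu2⟩ rfl]
        group
      exact MonoidHom.mem_ker.mpr hq
    intro x
    have hx2 : (x : BraidGroup n) ∈ Subgroup.closure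
        {y | ∃ g ∈ commutator (BraidGroup n), y = g * (sig n 2 * (sig n 1)⁻¹) ^ 2 * g⁻¹} := by
      rw [hclos]; exact x.2
    have hxK : (x : BraidGroup n) ∈
        Subgroup.map (commutator (BraidGroup n)).subtype q.ker :=
      hSK hx2
    obtain ⟨y, hy, hyx⟩ := hxK
    have : y = x := Subtype.ext hyx
    rw [← this]
    exact hy
  obtain ⟨x, rfl⟩ := hsurj g
  exact hx1 x
end

section
/- For n ≥ 5, if a quotient q: B'_n → G satisfies q(α_{ijk}) = q(β_{ijk}) for some triple i < j < k, then G is trivial. -/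
set_option maxHeartbeats 1000000

namespace BraidAux

variable {n : ℕ}

lemma mk_rel {r : FreeGroup (Fin (n-1))} (hr : r ∈ braidRels n) :
    PresentedGroup.mk (braidRels n) r = 1 := by
  change (QuotientGroup.mk r : PresentedGroup (braidRels n)) = 1
  rw [QuotientGroup.eq_one_iff]
  exact Subgroup.subset_normalClosure hr

lemma sig_eq {p : ℕ} (h1 : 1 ≤ p) (h2 : p ≤ n - 1) :
    sig n p = (PresentedGroup.of ⟨p - 1, by omega⟩ : PresentedGroup (braidRels n)) := by
  rw [sig]; exact dif_pos ⟨h1, h2⟩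

lemma sig_eq_one {p : ℕ} (h : ¬(1 ≤ p ∧ p ≤ n - 1)) : sig n p = 1 := by
  rw [sig]; exact dif_neg h

lemma braid_rel {p : ℕ} (h1 : 1 ≤ p) (h2 : p + 1 ≤ n - 1) :
    sig n p * sig n (p+1) * sig n p = sig n (p+1) * sig n p * sig n (p+1) := by
  have hi : p - 1 < n - 1 := by omega
  have hj : p + 1 - 1 < n - 1 := by omega
  have h := mk_rel (n := n) (r := .of ⟨p-1, hi⟩ * .of ⟨p+1-1, hj⟩ * .of ⟨p-1, hi⟩ *
      (.of ⟨p+1-1, hj⟩ * .of ⟨p-1, hi⟩ * .of ⟨p+1-1, hj⟩)⁻¹)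
    (Or.inl ⟨⟨p-1, hi⟩, ⟨p+1-1, hj⟩, by simp; omega, rfl⟩)
  simp only [map_mul, map_inv, mul_inv_eq_one] at h
  rw [sig_eq h1 (by omega), sig_eq (by omega : 1 ≤ p+1) h2]
  exact h

lemma comm_rel {p r : ℕ} (h : p + 2 ≤ r) : Commute (sig n p) (sig n r) := by
  by_cases hp : 1 ≤ p ∧ p ≤ n - 1
  · by_cases hr : 1 ≤ r ∧ r ≤ n - 1
    · have hi : p - 1 < n - 1 := by omega
      have hj : r - 1 < n - 1 := by omega
      have h := mk_rel (n := n) (r := .of ⟨p-1, hi⟩ * .of ⟨r-1, hj⟩ *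
          (.of ⟨r-1, hj⟩ * .of ⟨p-1, hi⟩)⁻¹)
        (Or.inr ⟨⟨p-1, hi⟩, ⟨r-1, hj⟩, by simp; omega, rfl⟩)
      simp only [map_mul, map_inv, mul_inv_eq_one] at h
      rw [Commute, SemiconjBy, sig_eq hp.1 hp.2, sig_eq hr.1 hr.2]
      exact h
    · rw [sig_eq_one hr]; exact Commute.one_right _
  · rw [sig_eq_one hp]; exact Commute.one_left _

lemma braid_conj {G : Type*} [Group G] {a b : G} (h : a*b*a = b*a*b) :
    a⁻¹ * b * a = b * a * b⁻¹ := by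
  calc a⁻¹ * b * a = a⁻¹ * (b*a*b) * b⁻¹ := by group
  _ = a⁻¹ * (a*b*a) * b⁻¹ := by rw [h]
  _ = b * a * b⁻¹ := by group

lemma braid_conj' {G : Type*} [Group G] {a b : G} (h : a*b*a = b*a*b) :
    a * b⁻¹ * a⁻¹ = b⁻¹ * a⁻¹ * b := by
  have e : a*b*a⁻¹ = b⁻¹*a*b := by
    calc a*b*a⁻¹ = b⁻¹*(b*a*b)*a⁻¹ := by group
    _ = b⁻¹*(a*b*a)*a⁻¹ := by rw [h]
    _ = b⁻¹*a*b := by group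
  calc a*b⁻¹*a⁻¹ = (a*b*a⁻¹)⁻¹ := by group
  _ = (b⁻¹*a*b)⁻¹ := by rw [e]
  _ = b⁻¹*a⁻¹*b := by group

lemma rho_self (i : ℕ) : rho n i i = sig n i := by
  simp [rho]

lemma rho_succ_self (i : ℕ) : rho n i (i+1) = sig n i := by
  simp [rho]

lemma rho_rec {i m : ℕ} (h : i ≤ m) :
    rho n i (m+1) = sig n m * rho n i m * (sig n m)⁻¹ := by
  rcases Nat.eq_or_lt_of_le h with rfl | hlt
  · rw [rho_succ_self, rho_self]; group
  · have h1 : m + 1 - 1 - i = (m - 1 - i) + 1 := by omega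
    have h2 : i + 1 + 1 * (m - 1 - i) = m := by omega
    rw [rho, rho, h1, List.range'_concat, List.reverse_append, h2]
    simp only [List.reverse_singleton, List.singleton_append, List.map_cons, List.prod_cons]
    group

lemma sig_commute_rho {m i j : ℕ} (hij : i < j) (hm : j + 1 ≤ m) :
    Commute (sig n m) (rho n i j) := by
  have hP : Commute (sig n m)
      (((List.range' (i + 1) (j - 1 - i)).reverse.map (sig n)).prod) := by
    apply Commute.list_prod_right
    intro x hx
    obtain ⟨a, ha, rfl⟩ := List.mem_map.1 hx
    rw [List.mem_reverse, List.mem_range'] at ha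
    obtain ⟨t, ht, rfl⟩ := ha
    exact (comm_rel (by omega)).symm
  exact (hP.mul_right (comm_rel (by omega)).symm).mul_right hP.inv_right

lemma rho_braid {i m : ℕ} (h1 : 1 ≤ i) (him : i ≤ m) (hm : m ≤ n - 1) :
    rho n i m * sig n m * rho n i m = sig n m * rho n i m * sig n m := by
  induction m, him using Nat.le_induction with
  | base => rw [rho_self]
  | succ m him IH =>
    rcases Nat.eq_or_lt_of_le him with rfl | hlt
    · rw [rho_succ_self]; exact braid_rel h1 hm
    · have IH := IH (by omega)
      set a := sig n m with ha
      set b := sig n (m+1) with hb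
      set y := rho n i m with hy
      have hcy : Commute y b := (sig_commute_rho (n := n) hlt le_rfl).symm
      have hbr : a * b * a = b * a * b := braid_rel (by omega) hm
      rw [rho_rec (by omega), ← ha, ← hy]
      have e1 : a⁻¹ * b * a = b * a * b⁻¹ := braid_conj hbr
      calc (a*y*a⁻¹) * b * (a*y*a⁻¹)
          = a*y*(a⁻¹*b*a)*y*a⁻¹ := by group
        _ = a*y*(b*a*b⁻¹)*y*a⁻¹ := by rw [e1]
        _ = a*(y*b)*a*(b⁻¹*y)*a⁻¹ := by group
        _ = a*(b*y)*a*(y*b⁻¹)*a⁻¹ := by rw [hcy.eq, (hcy.inv_right.eq).symm]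
        _ = a*b*(y*a*y)*b⁻¹*a⁻¹ := by group
        _ = a*b*(a*y*a)*b⁻¹*a⁻¹ := by rw [IH]
        _ = (a*b*a)*y*(a*b⁻¹*a⁻¹) := by group
        _ = (b*a*b)*y*(b⁻¹*a⁻¹*b) := by rw [hbr, braid_conj' hbr]
        _ = b*a*(b*y*b⁻¹)*a⁻¹*b := by group
        _ = b*a*(y)*a⁻¹*b := by rw [← hcy.eq]; group
        _ = b * (a*y*a⁻¹) * b := by group

lemma sig_isConj {p : ℕ} (h1 : 1 ≤ p) (h2 : p ≤ n-1) : IsConj (sig n 1) (sig n p) := by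
  induction p, h1 using Nat.le_induction with
  | base => exact IsConj.refl _
  | succ p hp IH =>
    refine (IH (by omega)).trans (isConj_iff.mpr ⟨sig n p * sig n (p+1), ?_⟩)
    have hbr := braid_rel (n := n) hp h2
    calc sig n p * sig n (p+1) * sig n p * (sig n p * sig n (p+1))⁻¹
        = (sig n p * sig n (p+1) * sig n p) * (sig n (p+1))⁻¹ * (sig n p)⁻¹ := by group
      _ = (sig n (p+1) * sig n p * sig n (p+1)) * (sig n (p+1))⁻¹ * (sig n p)⁻¹ := by rw [hbr]
      _ = sig n (p+1) := by group

lemma conj_elem {i j k : ℕ} (h1 : 1 ≤ i) (h2 : i < j) (h3 : j < k) (h4 : k ≤ n) :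
    ∃ g : BraidGroup n,
      rho n j k * (rho n i j)⁻¹ * (rho n j k)⁻¹ * rho n i j
        = g * (sig n j * (sig n (j-1))⁻¹ * (sig n j)⁻¹ * sig n (j-1)) * g⁻¹ := by
  set R := (((List.range' (j + 1) (k - 1 - j)).reverse.map (sig n)).prod) with hRdef
  set s := sig n j with hs
  set u := rho n i j with hu
  have hjk : rho n j k = R * s * R⁻¹ := rfl
  have hR : Commute R u := by
    apply Commute.list_prod_left
    intro x hx
    obtain ⟨a, ha, rfl⟩ := List.mem_map.1 hx
    rw [List.mem_reverse, List.mem_range'] at ha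
    obtain ⟨t, ht, rfl⟩ := ha
    exact sig_commute_rho h2 (by omega)
  have hc1 : R⁻¹ * u * R = u := by
    calc R⁻¹ * u * R = R⁻¹ * (u * R) := by group
      _ = R⁻¹ * (R * u) := by rw [← hR.eq]
      _ = u := by group
  have hc2 : R⁻¹ * u⁻¹ * R = u⁻¹ := by
    calc R⁻¹ * u⁻¹ * R = (R⁻¹ * u * R)⁻¹ := by group
      _ = u⁻¹ := by rw [hc1]
  have step1 : rho n j k * u⁻¹ * (rho n j k)⁻¹ * u
      = R * (s * u⁻¹ * s⁻¹ * u) * R⁻¹ := by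
    rw [hjk]
    calc (R * s * R⁻¹) * u⁻¹ * (R * s * R⁻¹)⁻¹ * u
        = R * s * (R⁻¹ * u⁻¹ * R) * s⁻¹ * (R⁻¹ * u * R) * R⁻¹ := by group
      _ = R * s * u⁻¹ * s⁻¹ * u * R⁻¹ := by rw [hc1, hc2]
      _ = R * (s * u⁻¹ * s⁻¹ * u) * R⁻¹ := by group
  rcases Nat.eq_or_lt_of_le h2 with hji | hlt
  · -- j = i + 1
    refine ⟨R, ?_⟩
    have hji' : j - 1 = i := by omega
    have huu : u = sig n (j-1) := by
      rw [hu, hji', ← hji, rho_succ_self]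
    rw [step1, huu]
  · -- i + 1 < j
    set d := sig n (j-1) with hd
    set y := rho n i (j-1) with hy
    have hyrec : u = d * y * d⁻¹ := by
      have hj1 : j - 1 + 1 = j := by omega
      rw [hu, ← hj1, rho_rec (by omega)]
    have hbr : y * d * y = d * y * d := by
      rw [hy, hd]; exact rho_braid h1 (by omega) (by omega)
    have huy : u = y⁻¹ * d * y := by
      rw [hyrec]
      calc d * y * d⁻¹ = y⁻¹ * (y * d * y) * d⁻¹ := by group
        _ = y⁻¹ * (d * y * d) * d⁻¹ := by rw [hbr]
        _ = y⁻¹ * d * y := by group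
    have hsy : Commute s y := by
      rw [hs, hy]; exact sig_commute_rho (by omega) (by omega)
    have hsy1 : y * s⁻¹ * y⁻¹ = s⁻¹ := by
      calc y * s⁻¹ * y⁻¹ = (y * s⁻¹) * y⁻¹ := by group
        _ = (s⁻¹ * y) * y⁻¹ := by rw [hsy.symm.inv_right.eq]
        _ = s⁻¹ := by group
    have hsy2 : s * y⁻¹ = y⁻¹ * s := hsy.inv_right.eq
    have step2 : s * u⁻¹ * s⁻¹ * u = y⁻¹ * (s * d⁻¹ * s⁻¹ * d) * y := by
      rw [huy]
      calc s * (y⁻¹ * d * y)⁻¹ * s⁻¹ * (y⁻¹ * d * y)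
          = (s * y⁻¹) * d⁻¹ * (y * s⁻¹ * y⁻¹) * d * y := by group
        _ = (y⁻¹ * s) * d⁻¹ * (s⁻¹) * d * y := by rw [hsy1, hsy2]
        _ = y⁻¹ * (s * d⁻¹ * s⁻¹ * d) * y := by group
    refine ⟨R * y⁻¹, ?_⟩
    rw [step1, step2]
    group

lemma exists_t (hn : 5 ≤ n) {j : ℕ} (h2j : 2 ≤ j) (hjn : j ≤ n-1) :
    ∃ t : BraidGroup n, IsConj (sig n 1) t ∧ Commute t (sig n (j-1)) ∧ Commute t (sig n j) := by
  by_cases hj4 : 4 ≤ j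
  · exact ⟨sig n 1, IsConj.refl _, comm_rel (by omega), comm_rel (by omega)⟩
  by_cases hjn3 : j + 2 ≤ n - 1
  · exact ⟨sig n (j+2), sig_isConj (by omega) (by omega),
      (comm_rel (by omega)).symm, (comm_rel (by omega)).symm⟩
  · -- n = 5, j = 3
    have hn5 : n = 5 := by omega
    have hj3 : j = 3 := by omega
    subst hn5 hj3
    set a1 := sig 5 1
    set a2 := sig 5 2
    set a3 := sig 5 3
    set a4 := sig 5 4
    set W := a4 * a3 * a2 with hW
    have b23 : a2 * a3 * a2 = a3 * a2 * a3 := braid_rel (by omega) (by omega)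
    have b34 : a3 * a4 * a3 = a4 * a3 * a4 := braid_rel (by omega) (by omega)
    have c24 : Commute a2 a4 := comm_rel (by omega)
    have c13 : Commute a1 a3 := comm_rel (by omega)
    have c14 : Commute a1 a4 := comm_rel (by omega)
    have hW2 : W⁻¹ * a2 * W = a3 := by
      calc W⁻¹ * a2 * W = a2⁻¹ * a3⁻¹ * (a4⁻¹ * (a2 * a4)) * a3 * a2 := by rw [hW]; group
        _ = a2⁻¹ * a3⁻¹ * (a4⁻¹ * (a4 * a2)) * a3 * a2 := by rw [c24.eq]
        _ = a2⁻¹ * a3⁻¹ * (a2 * a3 * a2) := by group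
        _ = a2⁻¹ * a3⁻¹ * (a3 * a2 * a3) := by rw [b23]
        _ = a3 := by group
    have hW3 : W⁻¹ * a3 * W = a4 := by
      calc W⁻¹ * a3 * W = a2⁻¹ * a3⁻¹ * (a4⁻¹ * (a3 * a4 * a3)) * a2 := by rw [hW]; group
        _ = a2⁻¹ * a3⁻¹ * (a4⁻¹ * (a4 * a3 * a4)) * a2 := by rw [b34]
        _ = a2⁻¹ * (a4 * a2) := by group
        _ = a2⁻¹ * (a2 * a4) := by rw [← c24.eq]
        _ = a4 := by group
    refine ⟨W * a1 * W⁻¹, isConj_iff.mpr ⟨W, rfl⟩, ?_, ?_⟩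
    · -- Commute (W a1 W⁻¹) a2
      have e2 : a2 = W * a3 * W⁻¹ := by
        calc a2 = W * (W⁻¹ * a2 * W) * W⁻¹ := by group
          _ = W * a3 * W⁻¹ := by rw [hW2]
      rw [Commute, SemiconjBy, e2]
      calc W * a1 * W⁻¹ * (W * a3 * W⁻¹) = W * (a1 * a3) * W⁻¹ := by group
        _ = W * (a3 * a1) * W⁻¹ := by rw [c13.eq]
        _ = W * a3 * W⁻¹ * (W * a1 * W⁻¹) := by group
    · have e3 : a3 = W * a4 * W⁻¹ := by
        calc a3 = W * (W⁻¹ * a3 * W) * W⁻¹ := by group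
          _ = W * a4 * W⁻¹ := by rw [hW3]
      rw [Commute, SemiconjBy, e3]
      calc W * a1 * W⁻¹ * (W * a4 * W⁻¹) = W * (a1 * a4) * W⁻¹ := by group
        _ = W * (a4 * a1) * W⁻¹ := by rw [c14.eq]
        _ = W * a4 * W⁻¹ * (W * a1 * W⁻¹) := by group

lemma mem_normalizer_of {G : Type*} [Group G] {S : Set G} {x : G}
    (h1 : ∀ s ∈ S, x * s * x⁻¹ ∈ Subgroup.closure S)
    (h2 : ∀ s ∈ S, x⁻¹ * s * x ∈ Subgroup.closure S) :
    x ∈ Subgroup.normalizer (Subgroup.closure S : Set G) := by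
  have fwd : ∀ (u : G), (∀ s ∈ S, u * s * u⁻¹ ∈ Subgroup.closure S) →
      ∀ z ∈ Subgroup.closure S, u * z * u⁻¹ ∈ Subgroup.closure S := by
    intro u hu z hz
    induction hz using Subgroup.closure_induction with
    | mem s hs => exact hu s hs
    | one => simpa using Subgroup.one_mem _
    | mul z w _ _ ihz ihw =>
      have hrw : u * (z * w) * u⁻¹ = (u * z * u⁻¹) * (u * w * u⁻¹) := by group
      rw [hrw]; exact Subgroup.mul_mem _ ihz ihw
    | inv z _ ihz =>
      have hrw : u * z⁻¹ * u⁻¹ = (u * z * u⁻¹)⁻¹ := by group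
      rw [hrw]; exact Subgroup.inv_mem _ ihz
  rw [Subgroup.mem_normalizer_iff]
  intro h
  constructor
  · intro hh; exact fwd x h1 h hh
  · intro hh
    have h2' : ∀ s ∈ S, x⁻¹ * s * (x⁻¹)⁻¹ ∈ Subgroup.closure S := by
      simpa using h2
    have := fwd x⁻¹ h2' _ hh
    have hrw : x⁻¹ * (x * h * x⁻¹) * (x⁻¹)⁻¹ = h := by group
    rwa [hrw] at this

lemma comm_of {H : Type*} [Group H] {a b : H} (h : a * b⁻¹ * a⁻¹ * b = 1) :
    a * b = b * a := by
  have h2 : a * b⁻¹ * a⁻¹ = b⁻¹ := by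
    calc a*b⁻¹*a⁻¹ = (a*b⁻¹*a⁻¹*b)*b⁻¹ := by group
      _ = 1 * b⁻¹ := by rw [h]
      _ = b⁻¹ := by group
  have h3 : a * b * a⁻¹ = b := by
    calc a*b*a⁻¹ = (a*b⁻¹*a⁻¹)⁻¹ := by group
      _ = (b⁻¹)⁻¹ := by rw [h2]
      _ = b := by group
  calc a*b = (a*b*a⁻¹)*a := by group
    _ = b*a := by rw [h3]

lemma eq_of_braid_comm {H : Type*} [Group H] {a b : H}
    (hcomm : a * b = b * a) (hbr : a * b * a = b * a * b) : a = b := by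
  have h1 : b * (a * a) = b * (b * a) := by
    calc b*(a*a) = (b*a)*a := by group
      _ = (a*b)*a := by rw [← hcomm]
      _ = b*a*b := hbr
      _ = b*(a*b) := by group
      _ = b*(b*a) := by rw [hcomm]
  have h2 : a * a = b * a := mul_left_cancel h1
  exact mul_right_cancel h2

end BraidAux

open scoped commutatorElement

/-- For n ≥ 5, if a quotient of B'_n identifies α_{ijk} = ρ_{jk}ρ_{ij}⁻¹ with
β_{ijk} = ρ_{ij}⁻¹ρ_{jk} for some triple i < j < k, then the quotient is trivial. -/
theorem quotient_trivial_of_alpha_eq_beta (n : ℕ) (hn : 5 ≤ n) {G : Type*} [Group G]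
    (q : ↥(commutator (BraidGroup n)) →* G) (hq : Function.Surjective q)
    (i j k : ℕ) (h1 : 1 ≤ i) (h2 : i < j) (h3 : j < k) (h4 : k ≤ n)
    (a b : ↥(commutator (BraidGroup n)))
    (ha : (a : BraidGroup n) = rho n j k * (rho n i j)⁻¹)
    (hb : (b : BraidGroup n) = (rho n i j)⁻¹ * rho n j k)
    (hab : q a = q b) :
    ∀ g : G, g = 1 := by
  have hj2 : 2 ≤ j := by omega
  have hjn : j ≤ n - 1 := by omega
  set c : BraidGroup n := rho n j k * (rho n i j)⁻¹ * (rho n j k)⁻¹ * rho n i j with hcdef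
  obtain ⟨g, hc⟩ := BraidAux.conj_elem h1 h2 h3 h4
  set e : BraidGroup n := sig n j * (sig n (j-1))⁻¹ * (sig n j)⁻¹ * sig n (j-1) with he
  obtain ⟨t0, ht0conj, ht0c1, ht0c2⟩ := BraidAux.exists_t hn hj2 hjn
  have hce : Commute t0 e :=
    ((ht0c2.mul_right ht0c1.inv_right).mul_right ht0c2.inv_right).mul_right ht0c1
  set t : BraidGroup n := g * t0 * g⁻¹ with ht
  have hcge : c = g * e * g⁻¹ := hcdef.trans hc
  have htc : t * c = c * t := by
    rw [hcge, ht]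
    calc (g*t0*g⁻¹)*(g*e*g⁻¹) = g*(t0*e)*g⁻¹ := by group
      _ = g*(e*t0)*g⁻¹ := by rw [hce.eq]
      _ = (g*e*g⁻¹)*(g*t0*g⁻¹) := by group
  have htconj : IsConj (sig n 1) t := ht0conj.trans (isConj_iff.mpr ⟨g, ht.symm⟩)
  clear_value c e t
  -- the subgroup K
  set S : Set (BraidGroup n) :=
    (fun w => w * c * w⁻¹) '' ((commutator (BraidGroup n) : Subgroup _) : Set _) with hS
  set K : Subgroup (BraidGroup n) := Subgroup.closure S with hK
  have hcK : c ∈ K := Subgroup.subset_closure ⟨1, Subgroup.one_mem _, by group⟩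
  -- commutator elements normalize K
  have hBnorm : ∀ w, w ∈ commutator (BraidGroup n) → w ∈ (Subgroup.normalizer (K : Set (BraidGroup n))) := by
    intro w hw
    apply BraidAux.mem_normalizer_of
    · rintro s ⟨u, hu, rfl⟩
      refine Subgroup.subset_closure ⟨w * u, Subgroup.mul_mem _ hw hu, by group⟩
    · rintro s ⟨u, hu, rfl⟩
      refine Subgroup.subset_closure ⟨w⁻¹ * u, Subgroup.mul_mem _ (Subgroup.inv_mem _ hw) hu,
        by group⟩
  -- t normalizes K
  have htcomm1 : ∀ u : BraidGroup n, t * (u * c * u⁻¹) * t⁻¹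
      = (t * u * t⁻¹) * c * (t * u * t⁻¹)⁻¹ := by
    intro u
    calc t * (u * c * u⁻¹) * t⁻¹ = (t*u*t⁻¹)*(t*c*t⁻¹)*(t*u*t⁻¹)⁻¹ := by group
      _ = (t*u*t⁻¹)*((c*t)*t⁻¹)*(t*u*t⁻¹)⁻¹ := by rw [htc]
      _ = (t*u*t⁻¹)*c*(t*u*t⁻¹)⁻¹ := by group
  have htcomm2 : ∀ u : BraidGroup n, t⁻¹ * (u * c * u⁻¹) * t
      = (t⁻¹ * u * t) * c * (t⁻¹ * u * t)⁻¹ := by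
    intro u
    calc t⁻¹ * (u * c * u⁻¹) * t = (t⁻¹*u*t)*(t⁻¹*(c*t))*(t⁻¹*u*t)⁻¹ := by group
      _ = (t⁻¹*u*t)*(t⁻¹*(t*c))*(t⁻¹*u*t)⁻¹ := by rw [← htc]
      _ = (t⁻¹*u*t)*c*(t⁻¹*u*t)⁻¹ := by group
  have hCnormal : (commutator (BraidGroup n)).Normal := inferInstance
  have htnorm : t ∈ (Subgroup.normalizer (K : Set (BraidGroup n))) := by
    apply BraidAux.mem_normalizer_of
    · rintro s ⟨u, hu, rfl⟩
      rw [htcomm1 u]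
      exact Subgroup.subset_closure ⟨t * u * t⁻¹, hCnormal.conj_mem u hu t, rfl⟩
    · rintro s ⟨u, hu, rfl⟩
      rw [htcomm2 u]
      refine Subgroup.subset_closure ⟨t⁻¹ * u * t, ?_, rfl⟩
      have := hCnormal.conj_mem u hu t⁻¹
      simpa using this
  -- every generator normalizes K
  have hgen : ∀ p, 1 ≤ p → p ≤ n - 1 → sig n p ∈ (Subgroup.normalizer (K : Set (BraidGroup n))) := by
    intro p hp1 hp2
    obtain ⟨z, hz⟩ := isConj_iff.mp (htconj.symm.trans (BraidAux.sig_isConj hp1 hp2))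
    have hmem : sig n p * t⁻¹ ∈ commutator (BraidGroup n) := by
      have : sig n p * t⁻¹ = ⁅z, t⁆ := by
        rw [commutatorElement_def, ← hz]
      rw [this, commutator_def]
      exact Subgroup.commutator_mem_commutator (Subgroup.mem_top z) (Subgroup.mem_top t)
    have : sig n p = (sig n p * t⁻¹) * t := by group
    rw [this]
    exact Subgroup.mul_mem _ (hBnorm _ hmem) htnorm
  -- K is normal
  have hnormtop : ∀ z : BraidGroup n, z ∈ (Subgroup.normalizer (K : Set (BraidGroup n))) := by
    intro z
    apply PresentedGroup.generated_by (braidRels n) (Subgroup.normalizer (K : Set (BraidGroup n)))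
    intro j'
    have hlt := j'.isLt
    have hofs : sig n ((j' : ℕ) + 1) = (PresentedGroup.of j' : BraidGroup n) := by
      rw [BraidAux.sig_eq (by omega) (by omega)]
      congr 1
    rw [← hofs]
    exact hgen _ (by omega) (by omega)
  haveI hKnormal : K.Normal := ⟨fun m hm g' => (Subgroup.mem_normalizer_iff.mp (hnormtop g') m).mp hm⟩
  -- quotient by K
  set π : BraidGroup n →* BraidGroup n ⧸ K := QuotientGroup.mk' K with hπ
  have hπc : π c = 1 := (QuotientGroup.eq_one_iff c).mpr hcK
  have hπe : π e = 1 := by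
    have : π e = (π g)⁻¹ * π c * π g := by
      calc π e = (π g)⁻¹ * (π g * π e * (π g)⁻¹) * π g := by group
        _ = (π g)⁻¹ * π (g * e * g⁻¹) * π g := by simp only [map_mul, map_inv]
        _ = (π g)⁻¹ * π c * π g := by rw [← hc, ← hcdef]
    rw [this, hπc]; group
  have braidQ : ∀ p, 1 ≤ p → p + 1 ≤ n - 1 →
      π (sig n p) * π (sig n (p+1)) * π (sig n p)
        = π (sig n (p+1)) * π (sig n p) * π (sig n (p+1)) := by
    intro p hp1 hp2
    have := congrArg π (BraidAux.braid_rel hp1 hp2)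
    simpa only [map_mul] using this
  have commQ : ∀ p r : ℕ, p + 2 ≤ r → π (sig n p) * π (sig n r) = π (sig n r) * π (sig n p) := by
    intro p r hpr
    have := congrArg π (BraidAux.comm_rel (n := n) hpr).eq
    simpa only [map_mul] using this
  have base : π (sig n (j-1)) = π (sig n j) := by
    have hj1 : j - 1 + 1 = j := by omega
    have hbrq := braidQ (j-1) (by omega) (by omega)
    rw [hj1] at hbrq
    have he1 : π (sig n j) * (π (sig n (j-1)))⁻¹ * (π (sig n j))⁻¹ * π (sig n (j-1)) = 1 := by
      have := hπe
      rw [he] at this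
      simpa only [map_mul, map_inv] using this
    have hcq := BraidAux.comm_of he1
    exact BraidAux.eq_of_braid_comm hcq.symm hbrq
  have up : ∀ m, j - 1 ≤ m → 1 ≤ m → m + 1 ≤ n - 1 →
      π (sig n m) = π (sig n (m+1)) := by
    intro m hm
    induction m, hm using Nat.le_induction with
    | base =>
      intro _ _
      have hj1 : j - 1 + 1 = j := by omega
      rw [hj1]; exact base
    | succ m hm IH =>
      intro h1m h2m
      have hprev : π (sig n m) = π (sig n (m+1)) := IH (by omega) (by omega)
      have hc2 : π (sig n m) * π (sig n (m+2)) = π (sig n (m+2)) * π (sig n m) :=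
        commQ m (m+2) (by omega)
      rw [hprev] at hc2
      have hbrq := braidQ (m+1) (by omega) h2m
      exact BraidAux.eq_of_braid_comm (show π (sig n (m+1)) * π (sig n (m+1+1)) = _ from hc2)
        hbrq
  have down : ∀ d p, p = j - 1 - d → 1 ≤ p → p + 1 ≤ n - 1 →
      π (sig n p) = π (sig n (p+1)) := by
    intro d
    induction d with
    | zero =>
      intro p hp _ _
      have hj1 : j - 1 + 1 = j := by omega
      rw [show p = j - 1 by omega, hj1]; exact base
    | succ d IH =>
      intro p hp h1p h2p
      have hpd : j - 1 - d = p + 1 := by omega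
      have hnext : π (sig n (p+1)) = π (sig n (p+1+1)) :=
        IH (p+1) hpd.symm (by omega) (by omega)
      have hc2 : π (sig n p) * π (sig n (p+2)) = π (sig n (p+2)) * π (sig n p) :=
        commQ p (p+2) (by omega)
      rw [show p + 2 = p + 1 + 1 from rfl, ← hnext] at hc2
      exact BraidAux.eq_of_braid_comm hc2 (braidQ p h1p h2p)
  have step : ∀ p, 1 ≤ p → p + 1 ≤ n - 1 → π (sig n p) = π (sig n (p+1)) := by
    intro p hp1 hp2
    rcases le_or_gt (j-1) p with h | h
    · exact up p h hp1 hp2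
    · exact down (j-1-p) p (by omega) hp1 hp2
  have hall : ∀ p, 1 ≤ p → p ≤ n - 1 → π (sig n p) = π (sig n 1) := by
    intro p hp1
    induction p, hp1 using Nat.le_induction with
    | base => intro _; rfl
    | succ p hp IH =>
      intro h2
      rw [← step p hp (by omega)]
      exact IH (by omega)
  have hof' : ∀ j' : Fin (n-1),
      π (PresentedGroup.of j' : BraidGroup n) ∈ Subgroup.zpowers (π (sig n 1)) := by
    intro j'
    have hlt := j'.isLt
    have hofs : sig n ((j' : ℕ) + 1) = (PresentedGroup.of j' : BraidGroup n) := by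
      rw [BraidAux.sig_eq (by omega) (by omega)]
      congr 1
    rw [← hofs, hall ((j' : ℕ)+1) (by omega) (by omega)]
    exact Subgroup.mem_zpowers _
  have hz : ∀ x : BraidGroup n, π x ∈ Subgroup.zpowers (π (sig n 1)) := by
    intro x
    have : x ∈ Subgroup.comap π (Subgroup.zpowers (π (sig n 1))) := by
      apply PresentedGroup.generated_by (braidRels n)
      intro j'
      exact Subgroup.mem_comap.mpr (hof' j')
    rwa [Subgroup.mem_comap] at this
  have habel : ∀ x y : BraidGroup n, ⁅x, y⁆ ∈ K := by
    intro x y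
    have hone : π ⁅x, y⁆ = 1 := by
      rw [map_commutatorElement, commutatorElement_eq_one_iff_commute]
      obtain ⟨m1, hm1⟩ := Subgroup.mem_zpowers_iff.mp (hz x)
      obtain ⟨m2, hm2⟩ := Subgroup.mem_zpowers_iff.mp (hz y)
      rw [← hm1, ← hm2]
      exact (Commute.refl _).zpow_zpow m1 m2
    exact (QuotientGroup.eq_one_iff _).mp hone
  have hCK : commutator (BraidGroup n) ≤ K := by
    rw [commutator_def]
    exact Subgroup.commutator_le.mpr fun g1 _ g2 _ => habel g1 g2
  -- transfer to G via q
  set N : Subgroup (BraidGroup n) :=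
    Subgroup.map (commutator (BraidGroup n)).subtype (MonoidHom.ker q) with hN
  have hcN : c ∈ N := by
    refine ⟨a * b⁻¹, ?_, ?_⟩
    · show q (a * b⁻¹) = 1
      rw [map_mul, map_inv, hab]
      group
    · show (commutator (BraidGroup n)).subtype (a * b⁻¹) = c
      rw [hcdef]
      simp only [Subgroup.coe_subtype, Subgroup.coe_mul, InvMemClass.coe_inv]
      rw [ha, hb]; group
  have hSN : S ⊆ (N : Set (BraidGroup n)) := by
    rintro s ⟨u, hu, rfl⟩
    obtain ⟨m, hm, hmc⟩ := hcN
    refine ⟨⟨u, hu⟩ * m * ⟨u, hu⟩⁻¹, ?_, ?_⟩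
    · have hqm : q m = 1 := hm
      show q (⟨u, hu⟩ * m * ⟨u, hu⟩⁻¹) = 1
      rw [map_mul, map_mul, map_inv, hqm]
      group
    · show (commutator (BraidGroup n)).subtype (⟨u, hu⟩ * m * ⟨u, hu⟩⁻¹) = u * c * u⁻¹
      simp only [map_mul, map_inv]
      rw [hmc]
      rfl
  have hKN : K ≤ N := (Subgroup.closure_le N).mpr hSN
  intro g0
  obtain ⟨x, rfl⟩ := hq g0
  have hxK : (x : BraidGroup n) ∈ K := hCK x.2
  obtain ⟨m, hm, hmx⟩ := hKN hxK
  have : m = x := Subtype.coe_injective hmx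
  rw [← this]
  exact MonoidHom.mem_ker.mp hm
end

section
/- For n ≥ 8, in any nontrivial quotient q: B'_n → G, the image q(σ_2σ_1^{-1}) has order at least 3. -/
namespace BraidAux

variable {n : ℕ}

lemma sig_of (i : ℕ) (h1 : 1 ≤ i) (h2 : i ≤ n - 1) :
    sig n i = PresentedGroup.of (rels := braidRels n) ⟨i - 1, by omega⟩ := by
  rw [sig]; exact dif_pos ⟨h1, h2⟩

lemma rel_one {r : FreeGroup (Fin (n - 1))} (hr : r ∈ braidRels n) :
    (PresentedGroup.mk (braidRels n) r : BraidGroup n) = 1 :=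
  (QuotientGroup.eq_one_iff r).mpr (Subgroup.subset_normalClosure hr)

lemma braid_adj (i : ℕ) (h1 : 1 ≤ i) (h2 : i + 1 ≤ n - 1) :
    sig n i * sig n (i + 1) * sig n i = sig n (i + 1) * sig n i * sig n (i + 1) := by
  have hi : i - 1 < n - 1 := by omega
  have hj : i < n - 1 := by omega
  have hr : (FreeGroup.of (⟨i - 1, hi⟩ : Fin (n - 1)) * .of ⟨i, hj⟩ * .of ⟨i - 1, hi⟩ *
      (FreeGroup.of (⟨i, hj⟩ : Fin (n - 1)) * .of ⟨i - 1, hi⟩ * .of ⟨i, hj⟩)⁻¹) ∈ braidRels n :=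
    Or.inl ⟨⟨i - 1, hi⟩, ⟨i, hj⟩, by simp only []; omega, rfl⟩
  have h := rel_one hr
  simp only [map_mul, map_inv] at h
  have h' := mul_inv_eq_one.mp h
  rw [sig_of i h1 (by omega), sig_of (i + 1) (by omega) h2]
  exact h'

lemma braid_comm (i j : ℕ) (h1 : 1 ≤ i) (hij : i + 2 ≤ j) (h2 : j ≤ n - 1) :
    sig n i * sig n j = sig n j * sig n i := by
  have hi : i - 1 < n - 1 := by omega
  have hj : j - 1 < n - 1 := by omega
  have hr : (FreeGroup.of (⟨i - 1, hi⟩ : Fin (n - 1)) * .of ⟨j - 1, hj⟩ *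
      (FreeGroup.of (⟨j - 1, hj⟩ : Fin (n - 1)) * .of ⟨i - 1, hi⟩)⁻¹) ∈ braidRels n :=
    Or.inr ⟨⟨i - 1, hi⟩, ⟨j - 1, hj⟩, by simp only []; omega, rfl⟩
  have h := rel_one hr
  rw [map_mul, map_inv, map_mul] at h
  have h' := mul_inv_eq_one.mp h
  rw [sig_of i h1 (by omega), sig_of j (by omega) h2]
  exact h'

lemma mem_of_sig_mem (H : Subgroup (BraidGroup n))
    (h : ∀ i : ℕ, 1 ≤ i → i ≤ n - 1 → sig n i ∈ H) : ∀ x : BraidGroup n, x ∈ H := by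
  intro x
  refine PresentedGroup.generated_by (braidRels n) H (fun j => ?_) x
  have hj := h (j.val + 1) (by omega) (by omega)
  rw [sig_of (j.val + 1) (by omega) (by omega)] at hj
  exact hj

lemma abel_eq (i : ℕ) (h1 : 1 ≤ i) (h2 : i ≤ n - 1) :
    Abelianization.of (sig n i) = Abelianization.of (sig n 1) := by
  induction i with
  | zero => omega
  | succ k ih =>
    rcases Nat.eq_or_lt_of_le h1 with h | h
    · rw [← h]
    · have hk1 : 1 ≤ k := by omega
      have hab := congrArg Abelianization.of (braid_adj k hk1 h2)
      rw [map_mul, map_mul, map_mul, map_mul] at hab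
      set x := Abelianization.of (sig n k) with hx
      set y := Abelianization.of (sig n (k + 1)) with hy
      have h3 : x * x = x * y := by
        calc x * x = y⁻¹ * (y * x) * x := by group
        _ = y⁻¹ * (x * y) * x := by rw [mul_comm y x]
        _ = y⁻¹ * (x * y * x) := by group
        _ = y⁻¹ * (y * x * y) := by rw [hab]
        _ = x * y := by group
      have h4 : y = x := (mul_left_cancel h3).symm
      rw [h4]
      exact ih hk1 (by omega)

lemma mem_commutator_of_abel {x : BraidGroup n} (h : Abelianization.of x = 1) :
    x ∈ commutator (BraidGroup n) :=
  (QuotientGroup.eq_one_iff x).mp h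

lemma diff_mem (i j : ℕ) (hi1 : 1 ≤ i) (hi2 : i ≤ n - 1) (hj1 : 1 ≤ j) (hj2 : j ≤ n - 1) :
    sig n i * (sig n j)⁻¹ ∈ commutator (BraidGroup n) := by
  apply mem_commutator_of_abel
  rw [map_mul, map_inv, abel_eq i hi1 hi2, abel_eq j hj1 hj2, mul_inv_cancel]

lemma inv_diff_mem (i j : ℕ) (hi1 : 1 ≤ i) (hi2 : i ≤ n - 1) (hj1 : 1 ≤ j) (hj2 : j ≤ n - 1) :
    (sig n i)⁻¹ * sig n j ∈ commutator (BraidGroup n) := by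
  apply mem_commutator_of_abel
  rw [map_mul, map_inv, abel_eq i hi1 hi2, abel_eq j hj1 hj2, inv_mul_cancel]

lemma conj_w_fst (i : ℕ) (h1 : 1 ≤ i) (h2 : i + 2 ≤ n - 1) :
    (sig n i * sig n (i + 1) * sig n (i + 2)) * sig n i *
      (sig n i * sig n (i + 1) * sig n (i + 2))⁻¹ = sig n (i + 1) := by
  have hc : sig n i * sig n (i + 2) = sig n (i + 2) * sig n i :=
    braid_comm i (i + 2) h1 (by omega) h2
  have hb : sig n i * sig n (i + 1) * sig n i = sig n (i + 1) * sig n i * sig n (i + 1) :=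
    braid_adj i h1 (by omega)
  set a := sig n i; set b := sig n (i + 1); set c := sig n (i + 2)
  calc a * b * c * a * (a * b * c)⁻¹ = a * b * (c * a) * c⁻¹ * b⁻¹ * a⁻¹ := by group
  _ = a * b * (a * c) * c⁻¹ * b⁻¹ * a⁻¹ := by rw [← hc]
  _ = (a * b * a) * b⁻¹ * a⁻¹ := by group
  _ = (b * a * b) * b⁻¹ * a⁻¹ := by rw [hb]
  _ = b := by group

lemma conj_w_snd (i : ℕ) (h1 : 1 ≤ i) (h2 : i + 2 ≤ n - 1) :
    (sig n i * sig n (i + 1) * sig n (i + 2)) * sig n (i + 1) *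
      (sig n i * sig n (i + 1) * sig n (i + 2))⁻¹ = sig n (i + 2) := by
  have hc : sig n i * sig n (i + 2) = sig n (i + 2) * sig n i :=
    braid_comm i (i + 2) h1 (by omega) h2
  have hb : sig n (i + 1) * sig n (i + 2) * sig n (i + 1) =
      sig n (i + 2) * sig n (i + 1) * sig n (i + 2) :=
    braid_adj (i + 1) (by omega) h2
  set a := sig n i; set b := sig n (i + 1); set c := sig n (i + 2)
  calc a * b * c * b * (a * b * c)⁻¹ = a * (b * c * b) * c⁻¹ * b⁻¹ * a⁻¹ := by group
  _ = a * (c * b * c) * c⁻¹ * b⁻¹ * a⁻¹ := by rw [hb]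
  _ = (a * c) * a⁻¹ := by group
  _ = (c * a) * a⁻¹ := by rw [← hc]
  _ = c := by group

lemma sq_one_imp {G : Type*} [Group G] {u v : G} (h : (u * v⁻¹) ^ 2 = 1) :
    u * v⁻¹ * u = v := by
  rw [sq] at h
  have h' : (u * v⁻¹ * u) * v⁻¹ = 1 := by rw [← h]; group
  exact mul_inv_eq_one.mp h'

lemma quot_core {G : Type*} [Group G] {x1 x2 x3 x4 : G}
    (h12 : x1 * x2 * x1 = x2 * x1 * x2) (h23 : x2 * x3 * x2 = x3 * x2 * x3)
    (h34 : x3 * x4 * x3 = x4 * x3 * x4)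
    (c24 : x2 * x4 = x4 * x2) (c14 : x1 * x4 = x4 * x1)
    (s23 : (x3 * x2⁻¹) ^ 2 = 1) (s34 : (x4 * x3⁻¹) ^ 2 = 1) : x1 = x2 := by
  have s23' : (x2 * x3⁻¹) ^ 2 = 1 := by
    have : (x2 * x3⁻¹) ^ 2 = ((x3 * x2⁻¹) ^ 2)⁻¹ := by rw [sq, sq]; group
    rw [this, s23, inv_one]
  have f1 : x4 * x3⁻¹ * x4 = x3 := sq_one_imp s34
  have f2 : x2 * x3⁻¹ * x2 = x3 := sq_one_imp s23'
  have e1 : x2 * x3 * x2 = x4 * x3 * x4 := by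
    calc x2 * x3 * x2 = x2 * (x4 * x3⁻¹ * x4) * x2 := by rw [f1]
    _ = (x2 * x4) * x3⁻¹ * (x4 * x2) := by group
    _ = (x4 * x2) * x3⁻¹ * (x2 * x4) := by nth_rewrite 1 [c24]; nth_rewrite 2 [← c24]; rfl
    _ = x4 * (x2 * x3⁻¹ * x2) * x4 := by group
    _ = x4 * x3 * x4 := by rw [f2]
  have e2 : x3 * x2 * x3 = x3 * x4 * x3 := by rw [← h23, e1, ← h34]
  have e2' : x3 * (x2 * x3) = x3 * (x4 * x3) := by rw [← mul_assoc, ← mul_assoc]; exact e2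
  have hbd : x2 = x4 := mul_right_cancel (mul_left_cancel e2')
  have c12 : x1 * x2 = x2 * x1 := by rw [hbd]; exact c14
  have h5 : x2 * (x1 * x1) = x2 * (x2 * x1) := by
    calc x2 * (x1 * x1) = (x2 * x1) * x1 := by group
    _ = (x1 * x2) * x1 := by rw [c12]
    _ = x2 * x1 * x2 := h12
    _ = x2 * (x1 * x2) := by group
    _ = x2 * (x2 * x1) := by rw [c12]
  exact mul_right_cancel (mul_left_cancel h5)

/-- Conjugating an element of the image of the normal closure of `b` by `t`
stays in the image, provided `t` conjugates `b` the same way some element of the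
commutator subgroup does. -/
lemma conj_aux (b : ↥(commutator (BraidGroup n)))
    (t d : BraidGroup n) (hd : d ∈ commutator (BraidGroup n))
    (hdb : t * (b : BraidGroup n) * t⁻¹ = d * (b : BraidGroup n) * d⁻¹) :
    ∀ y : ↥(commutator (BraidGroup n)), y ∈ Subgroup.normalClosure {b} →
      t * (y : BraidGroup n) * t⁻¹ ∈
        (Subgroup.normalClosure {b}).map (commutator (BraidGroup n)).subtype := by
  intro y hy
  have hy' : y ∈ Subgroup.closure (Group.conjugatesOfSet ({b} : Set ↥(commutator (BraidGroup n)))) := hy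
  refine Subgroup.closure_induction
    (p := fun (y : ↥(commutator (BraidGroup n))) _ => t * (y : BraidGroup n) * t⁻¹ ∈
      (Subgroup.normalClosure {b}).map (commutator (BraidGroup n)).subtype)
    ?_ ?_ ?_ ?_ hy'
  · intro c hc
    obtain ⟨a0, ha0, hconj⟩ := Group.mem_conjugatesOfSet_iff.mp hc
    rw [Set.mem_singleton_iff] at ha0
    subst ha0
    obtain ⟨h, hh⟩ := isConj_iff.mp hconj
    have hgmem : t * ((h : BraidGroup n) : BraidGroup n) * t⁻¹ ∈ commutator (BraidGroup n) := by
      exact Subgroup.Normal.conj_mem inferInstance _ h.2 t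
    set gH : ↥(commutator (BraidGroup n)) := ⟨t * (h : BraidGroup n) * t⁻¹, hgmem⟩
    set dH : ↥(commutator (BraidGroup n)) := ⟨d, hd⟩
    have hcoe : t * (c : BraidGroup n) * t⁻¹ =
        ((gH * (dH * a0 * dH⁻¹) * gH⁻¹ : ↥(commutator (BraidGroup n))) : BraidGroup n) := by
      push_cast
      rw [← hh]
      push_cast
      rw [show ((a0 : BraidGroup n)) = (a0 : BraidGroup n) from rfl]
      -- goal: t * (h * a0 * h⁻¹) * t⁻¹ = (t*h*t⁻¹) * (d*a0*d⁻¹) * (t*h*t⁻¹)⁻¹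
      rw [← hdb]
      rw [show (gH : BraidGroup n) = t * h * t⁻¹ from rfl]
      group
    rw [hcoe]
    have hb' : a0 ∈ Subgroup.normalClosure {a0} :=
      Subgroup.subset_normalClosure (Set.mem_singleton a0)
    exact Subgroup.mem_map.mpr ⟨_, Subgroup.Normal.conj_mem inferInstance _
      (Subgroup.Normal.conj_mem inferInstance _ hb' dH) gH, rfl⟩
  · simpa using Subgroup.one_mem _
  · intro y z _ _ ihy ihz
    have : t * ((y * z : ↥(commutator (BraidGroup n))) : BraidGroup n) * t⁻¹ =
        (t * (y : BraidGroup n) * t⁻¹) * (t * (z : BraidGroup n) * t⁻¹) := by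
      push_cast; group
    rw [this]
    exact Subgroup.mul_mem _ ihy ihz
  · intro y _ ihy
    have : t * ((y⁻¹ : ↥(commutator (BraidGroup n))) : BraidGroup n) * t⁻¹ =
        (t * (y : BraidGroup n) * t⁻¹)⁻¹ := by push_cast; group
    rw [this]
    exact Subgroup.inv_mem _ ihy

open scoped commutatorElement in
lemma closure_eq_top (hn : 8 ≤ n) (b : ↥(commutator (BraidGroup n)))
    (hb : (b : BraidGroup n) = sig n 2 * (sig n 1)⁻¹ ∨
          (b : BraidGroup n) = (sig n 2 * (sig n 1)⁻¹) ^ 2) :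
    Subgroup.normalClosure {b} = (⊤ : Subgroup ↥(commutator (BraidGroup n))) := by
  set N' : Subgroup (BraidGroup n) :=
    (Subgroup.normalClosure {b}).map (commutator (BraidGroup n)).subtype with hN'
  -- b commutes with every σ_m, m ≥ 4
  have hbu : ∀ m : ℕ, 4 ≤ m → m ≤ n - 1 → Commute (sig n m) (b : BraidGroup n) := by
    intro m hm4 hm2
    have hc1 : Commute (sig n m) (sig n 1) :=
      (braid_comm 1 m (by omega) (by omega) hm2).symm
    have hc2 : Commute (sig n m) (sig n 2) :=
      (braid_comm 2 m (by omega) (by omega) hm2).symm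
    have hcu : Commute (sig n m) (sig n 2 * (sig n 1)⁻¹) := hc2.mul_right hc1.inv_right
    rcases hb with h | h <;> rw [h]
    · exact hcu
    · exact hcu.pow_right 2
  -- choice of a far-away commuting generator
  have hM : ∀ i : ℕ, 1 ≤ i → i ≤ n - 1 → ∃ m : ℕ, (4 ≤ m ∧ m ≤ n - 1) ∧
      sig n i * sig n m = sig n m * sig n i := by
    intro i h1 h2
    by_cases hc : 3 ≤ i ∧ i ≤ 5
    · exact ⟨7, ⟨by omega, by omega⟩, braid_comm i 7 h1 (by omega) (by omega)⟩
    · rcases Nat.lt_or_ge i 3 with h | h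
      · exact ⟨4, ⟨by omega, by omega⟩, braid_comm i 4 h1 (by omega) (by omega)⟩
      · exact ⟨4, ⟨by omega, by omega⟩,
          (braid_comm 4 i (by omega) (by omega) h2).symm⟩
  -- key conjugation stability
  have key : ∀ i : ℕ, 1 ≤ i → i ≤ n - 1 → ∀ x ∈ N',
      sig n i * x * (sig n i)⁻¹ ∈ N' ∧ (sig n i)⁻¹ * x * sig n i ∈ N' := by
    intro i h1 h2 x hx
    obtain ⟨m, ⟨hm4, hm2⟩, hcomm⟩ := hM i h1 h2
    obtain ⟨y, hy, rfl⟩ := Subgroup.mem_map.mp hx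
    have hmb : Commute (sig n m) (b : BraidGroup n) := hbu m hm4 hm2
    constructor
    · refine conj_aux b (sig n i) (sig n i * (sig n m)⁻¹)
        (diff_mem i m h1 h2 (by omega) hm2) ?_ y hy
      have : (sig n m)⁻¹ * (b : BraidGroup n) = (b : BraidGroup n) * (sig n m)⁻¹ :=
        hmb.inv_left
      calc sig n i * (b : BraidGroup n) * (sig n i)⁻¹
          = sig n i * ((sig n m)⁻¹ * (b : BraidGroup n) * sig n m) * (sig n i)⁻¹ := by
            rw [this]; group
      _ = sig n i * (sig n m)⁻¹ * (b : BraidGroup n) *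
            (sig n i * (sig n m)⁻¹)⁻¹ := by group
    · have hmb' : sig n m * (b : BraidGroup n) = (b : BraidGroup n) * sig n m := hmb
      have hdb2 : (sig n i)⁻¹ * (b : BraidGroup n) * ((sig n i)⁻¹)⁻¹ =
          ((sig n i)⁻¹ * sig n m) * (b : BraidGroup n) * ((sig n i)⁻¹ * sig n m)⁻¹ := by
        calc (sig n i)⁻¹ * (b : BraidGroup n) * ((sig n i)⁻¹)⁻¹
            = (sig n i)⁻¹ * (sig n m * (b : BraidGroup n) * (sig n m)⁻¹) *
              ((sig n i)⁻¹)⁻¹ := by rw [hmb']; group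
        _ = (sig n i)⁻¹ * sig n m * (b : BraidGroup n) *
              ((sig n i)⁻¹ * sig n m)⁻¹ := by group
      have h' := conj_aux b (sig n i)⁻¹ ((sig n i)⁻¹ * sig n m)
        (inv_diff_mem i m h1 h2 (by omega) hm2) hdb2 y hy
      rw [inv_inv] at h'
      exact h'
  -- N' is normal
  have hNorm : N'.Normal := by
    rw [← Subgroup.normalizer_eq_top_iff, eq_top_iff]
    intro g _
    refine mem_of_sig_mem (Subgroup.normalizer (N' : Set (BraidGroup n))) (fun i h1 h2 => ?_) g
    rw [Subgroup.mem_normalizer_iff]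
    intro x
    constructor
    · intro hx
      exact (key i h1 h2 x hx).1
    · intro hx
      have := (key i h1 h2 _ hx).2
      have heq : (sig n i)⁻¹ * (sig n i * x * (sig n i)⁻¹) * sig n i = x := by group
      rwa [heq] at this
  -- σ₂σ₁⁻¹ ∈ N'
  have hbN' : (b : BraidGroup n) ∈ N' :=
    Subgroup.mem_map_of_mem _ (Subgroup.subset_normalClosure (Set.mem_singleton b))
  have hu2 : sig n 2 * (sig n 1)⁻¹ ∈ N' := by
    rcases hb with h | h
    · rwa [h] at hbN'
    · rw [h] at hbN'
      have hA : ∀ i : ℕ, 1 ≤ i → i + 2 ≤ n - 1 →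
          (sig n (i+1) * (sig n i)⁻¹) ^ 2 ∈ N' →
          (sig n (i+2) * (sig n (i+1))⁻¹) ^ 2 ∈ N' := by
        intro i h1 h2 hx
        have hcm := hNorm.conj_mem _ hx (sig n i * sig n (i+1) * sig n (i+2))
        have heq : (sig n i * sig n (i+1) * sig n (i+2)) * (sig n (i+1) * (sig n i)⁻¹) ^ 2 *
            (sig n i * sig n (i+1) * sig n (i+2))⁻¹ =
            (sig n (i+2) * (sig n (i+1))⁻¹) ^ 2 := by
          have c1 := conj_w_fst i h1 h2
          have c2 := conj_w_snd i h1 h2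
          set w := sig n i * sig n (i+1) * sig n (i+2)
          have : w * (sig n (i+1) * (sig n i)⁻¹) ^ 2 * w⁻¹ =
              ((w * sig n (i+1) * w⁻¹) * (w * sig n i * w⁻¹)⁻¹) ^ 2 := by
            rw [sq, sq]; group
          rw [this, c1, c2]
        rwa [heq] at hcm
      have h3' := hA 1 (by omega) (by omega) hbN'
      have h4' := hA 2 (by omega) (by omega) h3'
      letI := hNorm
      set π := QuotientGroup.mk' N' with hπ
      have hmap : ∀ i : ℕ, 1 ≤ i → i + 1 ≤ n - 1 →
          π (sig n i) * π (sig n (i+1)) * π (sig n i) =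
          π (sig n (i+1)) * π (sig n i) * π (sig n (i+1)) := by
        intro i h1 h2
        have := congrArg π (braid_adj i h1 h2)
        simpa [map_mul] using this
      have hcm' : ∀ i j : ℕ, 1 ≤ i → i + 2 ≤ j → j ≤ n - 1 →
          π (sig n i) * π (sig n j) = π (sig n j) * π (sig n i) := by
        intro i j h1 hij h2
        have := congrArg π (braid_comm i j h1 hij h2)
        simpa [map_mul] using this
      have hsq : ∀ i : ℕ, 1 ≤ i → i + 1 ≤ n - 1 →
          (sig n (i+1) * (sig n i)⁻¹) ^ 2 ∈ N' →
          (π (sig n (i+1)) * (π (sig n i))⁻¹) ^ 2 = 1 := by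
        intro i h1 h2 hmem
        have : π ((sig n (i+1) * (sig n i)⁻¹) ^ 2) = 1 :=
          (QuotientGroup.eq_one_iff _).mpr hmem
        simpa [map_pow, map_mul, map_inv] using this
      have hx12 : π (sig n 1) = π (sig n 2) :=
        quot_core (hmap 1 (by omega) (by omega)) (hmap 2 (by omega) (by omega))
          (hmap 3 (by omega) (by omega))
          (hcm' 2 4 (by omega) (by omega) (by omega))
          (hcm' 1 4 (by omega) (by omega) (by omega))
          (hsq 2 (by omega) (by omega) h3') (hsq 3 (by omega) (by omega) h4')
      have : π (sig n 2 * (sig n 1)⁻¹) = 1 := by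
        rw [map_mul, map_inv, ← hx12, mul_inv_cancel]
      exact (QuotientGroup.eq_one_iff _).mp this
  -- all adjacent differences are in N'
  have hdiffs : ∀ i : ℕ, 1 ≤ i → i ≤ n - 2 → sig n (i+1) * (sig n i)⁻¹ ∈ N' := by
    intro i h1 h2
    induction i, h1 using Nat.le_induction with
    | base => exact hu2
    | succ k hk ih =>
      have hk2 : k + 2 ≤ n - 1 := by omega
      have prev := ih (by omega)
      have hcm := hNorm.conj_mem _ prev (sig n k * sig n (k+1) * sig n (k+2))
      have heq : (sig n k * sig n (k+1) * sig n (k+2)) * (sig n (k+1) * (sig n k)⁻¹) *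
          (sig n k * sig n (k+1) * sig n (k+2))⁻¹ =
          sig n (k+2) * (sig n (k+1))⁻¹ := by
        have c1 := conj_w_fst k hk hk2
        have c2 := conj_w_snd k hk hk2
        set w := sig n k * sig n (k+1) * sig n (k+2)
        have : w * (sig n (k+1) * (sig n k)⁻¹) * w⁻¹ =
            (w * sig n (k+1) * w⁻¹) * (w * sig n k * w⁻¹)⁻¹ := by group
        rw [this, c1, c2]
      rwa [heq] at hcm
  -- the quotient is generated by one element, hence commutator ⊆ N'
  letI := hNorm
  set π := QuotientGroup.mk' N' with hπ
  have hgen : ∀ i : ℕ, 1 ≤ i → i ≤ n - 1 → π (sig n i) = π (sig n 1) := by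
    intro i h1 h2
    induction i, h1 using Nat.le_induction with
    | base => rfl
    | succ k hk ih =>
      have hd := hdiffs k hk (by omega)
      have : π (sig n (k+1) * (sig n k)⁻¹) = 1 := (QuotientGroup.eq_one_iff _).mpr hd
      rw [map_mul, map_inv] at this
      have := mul_inv_eq_one.mp this
      rw [this]
      exact ih (by omega)
  have hzp : ∀ x : BraidGroup n, π x ∈ Subgroup.zpowers (π (sig n 1)) := by
    intro x
    have := mem_of_sig_mem (Subgroup.comap π (Subgroup.zpowers (π (sig n 1))))
      (fun i h1 h2 => by
        rw [Subgroup.mem_comap, hgen i h1 h2]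
        exact Subgroup.mem_zpowers _) x
    exact this
  have hcomm_le : commutator (BraidGroup n) ≤ N' := by
    rw [commutator_def, Subgroup.commutator_le]
    intro g _ h _
    obtain ⟨kg, hkg⟩ := Subgroup.mem_zpowers_iff.mp (hzp g)
    obtain ⟨kh, hkh⟩ := Subgroup.mem_zpowers_iff.mp (hzp h)
    have : π ⁅g, h⁆ = 1 := by
      rw [map_commutatorElement]
      apply commutatorElement_eq_one_iff_commute.mpr
      rw [← hkg, ← hkh]
      exact Commute.zpow_zpow (Commute.refl _) kg kh
    exact (QuotientGroup.eq_one_iff _).mp this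
  -- conclude
  rw [eq_top_iff]
  rintro x -
  have hx : (x : BraidGroup n) ∈ N' := hcomm_le x.2
  obtain ⟨y, hyN, hyx⟩ := Subgroup.mem_map.mp hx
  have hxy : y = x := Subtype.ext hyx
  rwa [hxy] at hyN

end BraidAux

/-- For n ≥ 8, in any nontrivial quotient of B'_n the image of σ₂σ₁⁻¹ has order at
least 3 (it is nontrivial and its square is nontrivial). -/
theorem image_order_ge_three (n : ℕ) (hn : 8 ≤ n) {G : Type*} [Group G]
    (q : ↥(commutator (BraidGroup n)) →* G) (hq : Function.Surjective q)
    (hG : Nontrivial G) (a : ↥(commutator (BraidGroup n)))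
    (ha : (a : BraidGroup n) = sig n 2 * (sig n 1)⁻¹) :
    q a ≠ 1 ∧ (q a) ^ 2 ≠ 1 := by
  have trivialize : ∀ b : ↥(commutator (BraidGroup n)),
      ((b : BraidGroup n) = sig n 2 * (sig n 1)⁻¹ ∨
       (b : BraidGroup n) = (sig n 2 * (sig n 1)⁻¹) ^ 2) → q b = 1 → False := by
    intro b hb hqb
    have hle : Subgroup.normalClosure {b} ≤ q.ker :=
      Subgroup.normalClosure_le_normal (by
        intro x hx
        rw [Set.mem_singleton_iff] at hx
        subst hx
        exact MonoidHom.mem_ker.mpr hqb)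
    rw [BraidAux.closure_eq_top hn b hb] at hle
    obtain ⟨g, hg⟩ := exists_ne (1 : G)
    obtain ⟨x, rfl⟩ := hq g
    exact hg (MonoidHom.mem_ker.mp (hle (Subgroup.mem_top x)))
  constructor
  · exact fun h => trivialize a (Or.inl ha) h
  · intro h
    refine trivialize (a ^ 2) (Or.inr ?_) ?_
    · push_cast
      rw [ha]
    · rw [map_pow]
      exact h
end

section
/- Let q: B'_n → G be a quotient (n ≥ 8) and let R ≅ B'_{n−3} be the commutator subgroup of the braid group on the rightmost n−3 strands. If Z denotes the intersection of q(R) with the cyclic subgroup generated by q(σ_2σ_1^{-1}), then q(R)/Z is a nontrivial quotient of B'_{n−3}, provided n−3 ≥ 5. -/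
open scoped commutatorElement

private lemma rel_one {m : ℕ} {r : FreeGroup (Fin (m - 1))} (hr : r ∈ braidRels m) :
    PresentedGroup.mk (braidRels m) r = 1 :=
  (QuotientGroup.eq_one_iff r).mpr (Subgroup.subset_normalClosure hr)

private lemma sig_def {m i : ℕ} (h1 : 1 ≤ i) (h2 : i ≤ m - 1) :
    sig m i = PresentedGroup.of (rels := braidRels m) ⟨i - 1, by omega⟩ := by
  exact dif_pos (⟨h1, h2⟩ : 1 ≤ i ∧ i ≤ m - 1)

private lemma braid_rel (m i : ℕ) (h1 : 1 ≤ i) (h2 : i + 1 ≤ m - 1) :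
    sig m i * sig m (i + 1) * sig m i = sig m (i + 1) * sig m i * sig m (i + 1) := by
  rw [sig_def h1 (by omega), sig_def (by omega : 1 ≤ i + 1) h2]
  have hr : (FreeGroup.of (⟨i - 1, by omega⟩ : Fin (m-1)) * FreeGroup.of (⟨i + 1 - 1, by omega⟩ : Fin (m-1)) *
      FreeGroup.of (⟨i - 1, by omega⟩ : Fin (m-1)) *
      (FreeGroup.of (⟨i + 1 - 1, by omega⟩ : Fin (m-1)) * FreeGroup.of (⟨i - 1, by omega⟩ : Fin (m-1)) *
        FreeGroup.of (⟨i + 1 - 1, by omega⟩ : Fin (m-1)))⁻¹) ∈ braidRels m :=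
    Or.inl ⟨⟨i - 1, by omega⟩, ⟨i + 1 - 1, by omega⟩, by show i - 1 + 1 = i + 1 - 1; omega, rfl⟩
  have h := rel_one hr
  simp only [map_mul, map_inv] at h
  rw [mul_inv_eq_one] at h
  exact h

private lemma comm_rel (m i j : ℕ) (h1 : 1 ≤ i) (h2 : i + 2 ≤ j) (h3 : j ≤ m - 1) :
    Commute (sig m i) (sig m j) := by
  rw [sig_def h1 (by omega), sig_def (by omega : 1 ≤ j) h3]
  have hr : (FreeGroup.of (⟨i - 1, by omega⟩ : Fin (m-1)) * FreeGroup.of (⟨j - 1, by omega⟩ : Fin (m-1)) *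
      (FreeGroup.of (⟨j - 1, by omega⟩ : Fin (m-1)) * FreeGroup.of (⟨i - 1, by omega⟩ : Fin (m-1)))⁻¹) ∈ braidRels m :=
    Or.inr ⟨⟨i - 1, by omega⟩, ⟨j - 1, by omega⟩, by show i - 1 + 2 ≤ j - 1; omega, rfl⟩
  have h := rel_one hr
  simp only [map_mul, map_inv] at h
  rw [mul_inv_eq_one] at h
  exact h

private lemma cancel_braid {Q : Type*} [Group Q] {x y : Q} (h : x * y * x = y * x * y)
    (c : x * y = y * x) : x = y := by
  rw [c] at h
  exact mul_left_cancel h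

private lemma abel_succ (m k : ℕ) (h1 : 1 ≤ k) (h2 : k + 1 ≤ m - 1) :
    Abelianization.of (sig m (k + 1)) = Abelianization.of (sig m k) :=
  (cancel_braid
    (by simpa only [map_mul] using congrArg Abelianization.of (braid_rel m k h1 h2))
    (mul_comm _ _)).symm

private lemma abel_sig (m : ℕ) : ∀ i, 1 ≤ i → i ≤ m - 1 →
    Abelianization.of (sig m i) = Abelianization.of (sig m 1) := by
  intro i
  induction i with
  | zero => intro h1 _; omega
  | succ i ih =>
    intro h1 h2
    rcases Nat.eq_zero_or_pos i with h | h
    · subst h; rfl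
    · exact (abel_succ m i h h2).trans (ih h (by omega))

private lemma expSum_sig {m i : ℕ} (h1 : 1 ≤ i) (h2 : i ≤ m - 1) :
    expSum m (sig m i) = Multiplicative.ofAdd (1 : ℤ) := by
  rw [sig_def h1 h2]
  exact PresentedGroup.toGroup.of _

private lemma braid_gen {m : ℕ} (H : Subgroup (BraidGroup m))
    (h : ∀ i : Fin (m - 1), PresentedGroup.of (rels := braidRels m) i ∈ H) :
    ∀ x, x ∈ H :=
  fun x => PresentedGroup.generated_by (braidRels m) H h x

private lemma of_eq_sig {m : ℕ} (i : Fin (m - 1)) :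
    PresentedGroup.of (rels := braidRels m) i = sig m ((i : ℕ) + 1) := by
  have h2 : (i : ℕ) + 1 ≤ m - 1 := i.isLt
  have h3 : (⟨(i : ℕ) + 1 - 1, by omega⟩ : Fin (m - 1)) = i := Fin.ext (by simp)
  rw [sig_def (by omega) h2, h3]

private lemma abel_eq_pow {m : ℕ} (x : BraidGroup m) :
    Abelianization.of x =
      Abelianization.of (sig m 1) ^ (Multiplicative.toAdd (expSum m x)) := by
  have := braid_gen (MonoidHom.eqLocus
      ((zpowersHom _ (Abelianization.of (sig m 1))).comp (expSum m)) Abelianization.of)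
      (fun i => ?_) x
  · exact this.symm
  · rw [of_eq_sig i]
    show ((zpowersHom (Abelianization (BraidGroup m)) (Abelianization.of (sig m 1))).comp
        (expSum m)) (sig m ((i : ℕ) + 1)) = Abelianization.of (sig m ((i : ℕ) + 1))
    rw [MonoidHom.comp_apply, expSum_sig (by omega) i.isLt,
      abel_sig m ((i : ℕ) + 1) (by omega) i.isLt]
    simp

private lemma mem_commutator_of_expSum {m : ℕ} {x : BraidGroup m} (h : expSum m x = 1) :
    x ∈ commutator (BraidGroup m) := by
  have h2 := abel_eq_pow x
  rw [h] at h2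
  simp only [toAdd_one, zpow_zero] at h2
  exact (QuotientGroup.eq_one_iff x).mp h2

private lemma tij_mem {m i j : ℕ} (h1 : 1 ≤ i) (h2 : i ≤ m - 1) (h3 : 1 ≤ j) (h4 : j ≤ m - 1) :
    sig m i * (sig m j)⁻¹ ∈ commutator (BraidGroup m) := by
  apply mem_commutator_of_expSum
  rw [map_mul, map_inv, expSum_sig h1 h2, expSum_sig h3 h4, mul_inv_cancel]

private lemma comm_le_ncl (m k : ℕ) (hk : 1 ≤ k) (hk2 : k + 1 ≤ m - 1) :
    commutator (BraidGroup m) ≤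
      Subgroup.normalClosure {sig m (k + 1) * (sig m k)⁻¹} := by
  set N := Subgroup.normalClosure {sig m (k + 1) * (sig m k)⁻¹} with hN
  set f : BraidGroup m →* BraidGroup m ⧸ N := QuotientGroup.mk' N with hf
  have base : f (sig m k) = f (sig m (k + 1)) := by
    have h : f (sig m (k + 1) * (sig m k)⁻¹) = 1 :=
      (QuotientGroup.eq_one_iff _).mpr (Subgroup.subset_normalClosure rfl)
    rw [map_mul, map_inv, mul_inv_eq_one] at h
    exact h.symm
  have step : ∀ i, 1 ≤ i → i + 2 ≤ m - 1 →
      ((f (sig m i) = f (sig m (i + 1))) ↔ (f (sig m (i + 1)) = f (sig m (i + 2)))) := by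
    intro i h1 h2
    have hb1 : f (sig m i) * f (sig m (i + 1)) * f (sig m i)
        = f (sig m (i + 1)) * f (sig m i) * f (sig m (i + 1)) := by
      simpa only [map_mul] using congrArg f (braid_rel m i h1 (by omega))
    have hb2 : f (sig m (i + 1)) * f (sig m (i + 2)) * f (sig m (i + 1))
        = f (sig m (i + 2)) * f (sig m (i + 1)) * f (sig m (i + 2)) := by
      simpa only [map_mul] using congrArg f (braid_rel m (i + 1) (by omega) (by omega))
    have hc : f (sig m i) * f (sig m (i + 2)) = f (sig m (i + 2)) * f (sig m i) := by
      simpa only [map_mul] using congrArg f (comm_rel m i (i + 2) h1 (le_refl _) h2).eq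
    constructor
    · intro h
      rw [h] at hc
      exact cancel_braid hb2 hc
    · intro h
      rw [← h] at hc
      exact cancel_braid hb1 hc
  have up : ∀ d, k + d + 1 ≤ m - 1 → f (sig m (k + d)) = f (sig m (k + d + 1)) := by
    intro d
    induction d with
    | zero => intro _; exact base
    | succ d ih =>
      intro hd
      exact (step (k + d) (by omega) (by omega)).mp (ih (by omega))
  have down : ∀ d, d < k → f (sig m (k - d)) = f (sig m (k - d + 1)) := by
    intro d
    induction d with
    | zero => intro _; exact base
    | succ d ih =>
      intro hd
      have h1 : k - (d + 1) + 1 = k - d := by omega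
      have h2 : k - (d + 1) + 2 = k - d + 1 := by omega
      refine (step (k - (d + 1)) (by omega) (by omega)).mpr ?_
      rw [h1, h2]
      exact ih (by omega)
  have all : ∀ i, 1 ≤ i → i + 1 ≤ m - 1 → f (sig m i) = f (sig m (i + 1)) := by
    intro i h1 h2
    rcases le_or_gt k i with h | h
    · have := up (i - k) (by omega)
      rwa [show k + (i - k) = i by omega] at this
    · have := down (k - i) (by omega)
      rwa [show k - (k - i) = i by omega] at this
  have toOne : ∀ i, 1 ≤ i → i ≤ m - 1 → f (sig m i) = f (sig m 1) := by
    intro i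
    induction i with
    | zero => intro h1 _; omega
    | succ i ih =>
      intro h1 h2
      rcases Nat.eq_zero_or_pos i with h | h
      · subst h; rfl
      · exact (all i h h2).symm.trans (ih h (by omega))
  have chain : ∀ i, 1 ≤ i → i ≤ m - 1 → f (sig m i) = f (sig m k) := fun i h1 h2 =>
    (toOne i h1 h2).trans (toOne k hk (by omega)).symm
  have genAll : ∀ x : BraidGroup m, f x ∈ Subgroup.zpowers (f (sig m k)) := by
    intro x
    refine braid_gen (Subgroup.comap f (Subgroup.zpowers (f (sig m k)))) (fun i => ?_) x
    have hgen : f (sig m ((i : ℕ) + 1)) ∈ Subgroup.zpowers (f (sig m k)) := by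
      rw [chain ((i : ℕ) + 1) (by omega) i.isLt]
      exact Subgroup.mem_zpowers _
    have hgen2 : f (PresentedGroup.of i : BraidGroup m) ∈ Subgroup.zpowers (f (sig m k)) := by
      rw [show (PresentedGroup.of i : BraidGroup m) = sig m ((i : ℕ) + 1) from of_eq_sig i]
      exact hgen
    exact Subgroup.mem_comap.mpr hgen2
  rw [commutator_def]
  refine Subgroup.commutator_le.mpr fun p _ r _ => ?_
  have h : f ⁅p, r⁆ = 1 := by
    rw [map_commutatorElement]
    obtain ⟨z1, hz1⟩ := genAll p
    obtain ⟨z2, hz2⟩ := genAll r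
    rw [← hz1, ← hz2]
    exact commutatorElement_eq_one_iff_commute.mpr ((Commute.refl _).zpow_zpow z1 z2)
  exact (QuotientGroup.eq_one_iff _).mp h

example : True := trivial

private lemma perfect (m : ℕ) (hm : 5 ≤ m) :
    commutator ↥(commutator (BraidGroup m)) = ⊤ := by
  set B' := commutator (BraidGroup m) with hB'
  set D : Subgroup (BraidGroup m) := ⁅B', B'⁆ with hD
  haveI hDn : D.Normal := Subgroup.commutator_normal B' B'
  set s1 := sig m 1 with hs1
  set s2 := sig m 2 with hs2
  set s4 := sig m 4 with hs4
  set t := s2 * s1⁻¹ with htdef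
  set g := s1 * s4⁻¹ with hgdef
  have ht : t ∈ B' := tij_mem (by omega) (by omega) (by omega) (by omega)
  have hg : g ∈ B' := tij_mem (by omega) (by omega) (by omega) (by omega)
  have c14 : Commute s1 s4 := comm_rel m 1 4 (by omega) (by omega) (by omega)
  have c24 : Commute s2 s4 := comm_rel m 2 4 (by omega) (by omega) (by omega)
  have ct4 : Commute t s4 := c24.mul_left c14.inv_left
  have e1 : g⁻¹ * t * g = s1⁻¹ * t * s1 := by
    have hx : Commute (s1⁻¹ * t * s1) s4 := (c14.inv_left.mul_left ct4).mul_left c14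
    calc g⁻¹ * t * g = s4 * (s1⁻¹ * t * s1) * s4⁻¹ := by rw [hgdef]; group
      _ = (s1⁻¹ * t * s1) * s4 * s4⁻¹ := by rw [← hx.eq]
      _ = s1⁻¹ * t * s1 := by group
  have e2 : g * t * g⁻¹ = s1 * t * s1⁻¹ := by
    calc g * t * g⁻¹ = s1 * s4⁻¹ * (t * s4) * s1⁻¹ := by rw [hgdef]; group
      _ = s1 * s4⁻¹ * (s4 * t) * s1⁻¹ := by rw [ct4.eq]
      _ = s1 * t * s1⁻¹ := by group
  have key : (s1⁻¹ * t * s1) * (s1 * t * s1⁻¹) = t := by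
    have hb : s1 * s2 * s1 = s2 * s1 * s2 := braid_rel m 1 (le_refl 1) (by omega)
    rw [htdef]
    calc (s1⁻¹ * (s2 * s1⁻¹) * s1) * (s1 * (s2 * s1⁻¹) * s1⁻¹)
        = s1⁻¹ * (s2 * s1 * s2) * s1⁻¹ * s1⁻¹ := by group
      _ = s1⁻¹ * (s1 * s2 * s1) * s1⁻¹ * s1⁻¹ := by rw [hb]
      _ = s2 * s1⁻¹ := by group
  have hT : t = (g⁻¹ * t * g) * (g * t * g⁻¹) := by rw [e1, e2]; exact key.symm
  have hc1 : ⁅g⁻¹, t⁆ ∈ D := Subgroup.commutator_mem_commutator (inv_mem hg) ht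
  have hc2 : ⁅g, t⁆ ∈ D := Subgroup.commutator_mem_commutator hg ht
  have htD : t ∈ D := by
    have h6 : t⁻¹ = (t⁻¹ * ⁅g⁻¹, t⁆ * t) * ⁅g, t⁆ := by
      rw [commutatorElement_def, commutatorElement_def, inv_inv]
      calc t⁻¹ = t⁻¹ * ((g⁻¹ * t * g) * (g * t * g⁻¹)) * t⁻¹ := by
            rw [← hT]; group
        _ = t⁻¹ * (g⁻¹ * t * g * t⁻¹) * t * (g * t * g⁻¹ * t⁻¹) := by group
    have hinv : t⁻¹ ∈ D := by
      rw [h6]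
      refine mul_mem ?_ hc2
      have hconj := hDn.conj_mem _ hc1 t⁻¹
      simpa using hconj
    simpa using inv_mem hinv
  have hBD : B' ≤ D := by
    have h1 : B' ≤ Subgroup.normalClosure {sig m (1 + 1) * (sig m 1)⁻¹} :=
      comm_le_ncl m 1 (le_refl 1) (by omega)
    have h2 : Subgroup.normalClosure {sig m (1 + 1) * (sig m 1)⁻¹} ≤ D := by
      refine Subgroup.normalClosure_le_normal ?_
      rw [Set.singleton_subset_iff]
      exact htD
    exact h1.trans h2
  rw [eq_top_iff]
  intro x _
  have hx2 : (x : BraidGroup m) ∈ Subgroup.map B'.subtype (commutator ↥B') := by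
    have hmap : Subgroup.map B'.subtype (commutator ↥B') = D := by
      rw [commutator_def, Subgroup.map_commutator, ← MonoidHom.range_eq_map,
        Subgroup.range_subtype, hD]
    rw [hmap]
    exact hBD x.2
  obtain ⟨y, hy, hyx⟩ := hx2
  have : y = x := Subtype.ext hyx
  rwa [← this]


/-- For n ≥ 8: let `R ≅ B'_{n-3}` be the commutator subgroup of the braid group on the
rightmost n-3 strands, included in `B'_n` via `ι`, and let `φ : B'_{n-3} → G` be the
restriction of the nontrivial quotient `q`. With `Z` the intersection of `q(R) = φ.range`
with the cyclic subgroup generated by the image of σ₂σ₁⁻¹, the quotient `q(R)/Z` is a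
nontrivial quotient of `B'_{n-3}`: `φ` maps onto `q(R)`, and `q(R)` is not contained
in `Z`. -/
theorem qR_mod_Z_nontrivial_quotient (n : ℕ) (hn : 8 ≤ n) {G : Type*} [Group G]
    (q : ↥(commutator (BraidGroup n)) →* G) (hq : Function.Surjective q)
    (hG : Nontrivial G)
    (ι : BraidGroup (n - 3) →* BraidGroup n)
    (hι : ∀ i : ℕ, 1 ≤ i → i ≤ n - 4 → ι (sig (n - 3) i) = sig n (i + 3))
    (hc : ∀ x ∈ commutator (BraidGroup (n - 3)), ι x ∈ commutator (BraidGroup n))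
    (a : ↥(commutator (BraidGroup n)))
    (ha : (a : BraidGroup n) = sig n 2 * (sig n 1)⁻¹)
    (φ : ↥(commutator (BraidGroup (n - 3))) →* G)
    (hφ : φ = q.comp (((ι.domRestrict (commutator (BraidGroup (n - 3)))).codRestrict
        (commutator (BraidGroup n)) (fun x => hc x x.2)))) :
    (∀ g ∈ φ.range, ∃ x, φ x = g) ∧
    ∃ g ∈ φ.range, g ∉ φ.range ⊓ Subgroup.zpowers (q a) := by
  refine ⟨fun g hg => MonoidHom.mem_range.mp hg, ?_⟩
  by_contra hcon
  push_neg at hcon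
  have hzp : ∀ x, φ x ∈ Subgroup.zpowers (q a) := fun x =>
    (Subgroup.mem_inf.mp (hcon (φ x) (MonoidHom.mem_range.mpr ⟨x, rfl⟩))).2
  -- φ is trivial, since its image is abelian and B'_{n-3} is perfect
  have hφ1 : ∀ x, φ x = 1 := by
    have hker : commutator ↥(commutator (BraidGroup (n - 3))) ≤ φ.ker := by
      show ⁅(⊤ : Subgroup ↥(commutator (BraidGroup (n - 3)))), ⊤⁆ ≤ φ.ker
      refine Subgroup.commutator_le.mpr fun p _ r _ => ?_
      rw [MonoidHom.mem_ker, map_commutatorElement]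
      obtain ⟨z1, hz1⟩ := Subgroup.mem_zpowers_iff.mp (hzp p)
      obtain ⟨z2, hz2⟩ := Subgroup.mem_zpowers_iff.mp (hzp r)
      rw [← hz1, ← hz2]
      exact commutatorElement_eq_one_iff_commute.mpr ((Commute.refl _).zpow_zpow z1 z2)
    intro x
    exact hker (by rw [perfect (n - 3) (by omega)]; trivial)
  -- hence q kills σ₅σ₄⁻¹
  have ht3m : sig (n-3) 2 * (sig (n-3) 1)⁻¹ ∈ commutator (BraidGroup (n - 3)) :=
    tij_mem (by omega) (by omega) (by omega) (by omega)
  have ht4m : sig n 5 * (sig n 4)⁻¹ ∈ commutator (BraidGroup n) :=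
    tij_mem (by omega) (by omega) (by omega) (by omega)
  have hιt : ι (sig (n-3) 2 * (sig (n-3) 1)⁻¹) = sig n 5 * (sig n 4)⁻¹ := by
    rw [map_mul, map_inv, hι 2 (by omega) (by omega), hι 1 (by omega) (by omega)]
  have hqt4 : q ⟨sig n 5 * (sig n 4)⁻¹, ht4m⟩ = 1 := by
    have h0 := hφ1 ⟨sig (n-3) 2 * (sig (n-3) 1)⁻¹, ht3m⟩
    rw [hφ, MonoidHom.comp_apply] at h0
    have harg : ((ι.domRestrict (commutator (BraidGroup (n - 3)))).codRestrict
          (commutator (BraidGroup n)) (fun x => hc x x.2))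
          ⟨sig (n-3) 2 * (sig (n-3) 1)⁻¹, ht3m⟩
        = ⟨sig n 5 * (sig n 4)⁻¹, ht4m⟩ := by
      apply Subtype.ext
      exact hιt
    rwa [harg] at h0
  -- q kills everything
  have hker2 : ∀ y : ↥(commutator (BraidGroup n)), q y = 1 := by
    set K' := Subgroup.map (commutator (BraidGroup n)).subtype q.ker with hK'
    have hsub : Group.conjugatesOfSet {sig n 5 * (sig n 4)⁻¹} ⊆ (K' : Set (BraidGroup n)) := by
      intro x hx
      rw [Group.mem_conjugatesOfSet_iff] at hx
      obtain ⟨b, hb, hconj⟩ := hx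
      rw [Set.mem_singleton_iff] at hb
      subst hb
      obtain ⟨c, hcconj⟩ := isConj_iff.mp hconj
      set e : ℤ := Multiplicative.toAdd (expSum n c) with he
      have hc'm : c * (sig n 1) ^ (-e) ∈ commutator (BraidGroup n) := by
        apply mem_commutator_of_expSum
        rw [map_mul, map_zpow, expSum_sig (le_refl 1) (by omega)]
        refine Multiplicative.toAdd.injective ?_
        simp [he]
      have c15 : Commute (sig n 1) (sig n 5) := comm_rel n 1 5 (by omega) (by omega) (by omega)
      have c14 : Commute (sig n 1) (sig n 4) := comm_rel n 1 4 (by omega) (by omega) (by omega)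
      have c1t : Commute ((sig n 1) ^ (-e)) (sig n 5 * (sig n 4)⁻¹) :=
        (c15.mul_right c14.inv_right).zpow_left _
      have hxc : (c * (sig n 1) ^ (-e)) * (sig n 5 * (sig n 4)⁻¹) * (c * (sig n 1) ^ (-e))⁻¹
          = x := by
        calc (c * (sig n 1) ^ (-e)) * (sig n 5 * (sig n 4)⁻¹) * (c * (sig n 1) ^ (-e))⁻¹
            = c * ((sig n 1) ^ (-e) * (sig n 5 * (sig n 4)⁻¹)) * ((sig n 1) ^ (-e))⁻¹ * c⁻¹ := by
              group
          _ = c * ((sig n 5 * (sig n 4)⁻¹) * (sig n 1) ^ (-e)) * ((sig n 1) ^ (-e))⁻¹ * c⁻¹ := by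
              rw [c1t.eq]
          _ = c * (sig n 5 * (sig n 4)⁻¹) * c⁻¹ := by group
          _ = x := hcconj
      refine ⟨(⟨c * (sig n 1) ^ (-e), hc'm⟩ : ↥(commutator (BraidGroup n)))
          * ⟨sig n 5 * (sig n 4)⁻¹, ht4m⟩ * ⟨c * (sig n 1) ^ (-e), hc'm⟩⁻¹, ?_, ?_⟩
      · exact (MonoidHom.normal_ker q).conj_mem _ (MonoidHom.mem_ker.mpr hqt4) _
      · exact hxc
    have hK'le : commutator (BraidGroup n) ≤ K' := by
      refine le_trans (comm_le_ncl n 4 (by omega) (by omega)) ?_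
      show Subgroup.closure (Group.conjugatesOfSet {sig n (4+1) * (sig n 4)⁻¹}) ≤ K'
      exact (Subgroup.closure_le K').mpr hsub
    intro y
    obtain ⟨z, hz, hzy⟩ := hK'le y.2
    have hzz : z = y := Subtype.ext hzy
    rw [← hzz]
    exact hz
  obtain ⟨u, v, huv⟩ := hG
  obtain ⟨yu, hyu⟩ := hq u
  obtain ⟨yv, hyv⟩ := hq v
  exact huv (by rw [← hyu, ← hyv, hker2 yu, hker2 yv])
end
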